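/- arXiv:1306.4827 — 9 statements merged into one kernel-verified Lean document; each statement's English description precedes it below -/
import Mathlib

section
/- Let S be a transformation semigroup on a finite set Ω and Gr(S) the associated graph (v adjacent to w iff no f∈S collapses them). Then the clique number of Gr(S) equals the minimum rank of an element of S. -/
open Finset

variable {Ω : Type*} [Fintype Ω] [DecidableEq Ω]

/-- The graph associated to a set of transformations: `v ~ w` iff no `f ∈ S` collapses them. -/
def Gr (S : Set (Ω → Ω)) : SimpleGraph Ω where
  Adj v w := v ≠ w ∧ ∀ f ∈ S, f v ≠ f w
  symm := ⟨by rintro v w ⟨h1, h2⟩; exact ⟨h1.symm, fun f hf => (h2 f hf).symm⟩⟩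
  loopless := ⟨by rintro v ⟨h, _⟩; exact h rfl⟩

/-- The rank of a transformation of a finite set: the size of its image. -/
def rank (f : Ω → Ω) : ℕ := (Finset.univ.image f).card

/-- A permutation group is primitive if it is transitive and all blocks are trivial. -/
def IsPrimitive (G : Subgroup (Equiv.Perm Ω)) : Prop :=
  MulAction.IsPretransitive G Ω ∧
    ∀ B : Set Ω, MulAction.IsBlock G B → B.Subsingleton ∨ B = Set.univ

/-- The semigroup generated by a permutation group `G` and a transformation `f`. -/
def genSemigroup (G : Subgroup (Equiv.Perm Ω)) (f : Ω → Ω) : Subsemigroup (Function.End Ω) :=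
  Subsemigroup.closure ((fun g : Equiv.Perm Ω => (g : Ω → Ω)) '' (G : Set (Equiv.Perm Ω)) ∪ {f})

/-- `G` synchronizes `f` if `⟨G, f⟩` contains a constant map. -/
def Synchronizes (G : Subgroup (Equiv.Perm Ω)) (f : Ω → Ω) : Prop :=
  ∃ h ∈ genSemigroup G f, ∃ c : Ω, ∀ x : Ω, h x = c

/-- `f` has kernel type `(k,1,…,1)`: one kernel class of size `k`, all others singletons. -/
def KernelTypeK (f : Ω → Ω) (k : ℕ) : Prop :=
  ∃ A : Finset Ω, A.card = k ∧ (∀ x ∈ A, ∀ y ∈ A, f x = f y) ∧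
    ∀ x y : Ω, f x = f y → x = y ∨ (x ∈ A ∧ y ∈ A)

/-- `f` has kernel type `(3,2,1,…,1)`. -/
def KernelType32 (f : Ω → Ω) : Prop :=
  ∃ A B : Finset Ω, A.card = 3 ∧ B.card = 2 ∧
    (∀ x ∈ A, ∀ y ∈ A, f x = f y) ∧ (∀ x ∈ B, ∀ y ∈ B, f x = f y) ∧
    ∀ x y : Ω, f x = f y → x = y ∨ (x ∈ A ∧ y ∈ A) ∨ (x ∈ B ∧ y ∈ B)

theorem stmt3 (S : Set (Ω → Ω)) (hS : ∀ f ∈ S, ∀ g ∈ S, (g ∘ f) ∈ S) (r : ℕ)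
    (hr : ∃ f ∈ S, rank f = r) (hmin : ∀ f ∈ S, r ≤ rank f) :
    IsGreatest {n : ℕ | ∃ t : Finset Ω, (Gr S).IsNClique n t} r := by
  obtain ⟨f, hf, hrf⟩ := hr
  constructor
  · -- the image of f is an r-clique
    refine ⟨Finset.univ.image f, ?_, hrf⟩
    intro v hv w hw hvw
    refine ⟨hvw, fun g hg hgvw => ?_⟩
    have hgf := hS f hf g hg
    have := hmin _ hgf
    -- rank (g ∘ f) < r : contradiction
    have himg : (Finset.univ.image (g ∘ f)) = (Finset.univ.image f).image g := by
      rw [Finset.image_image]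
    have hsub : (Finset.univ.image f).image g ⊆ ((Finset.univ.image f).erase w).image g := by
      intro y hy
      obtain ⟨x, hx, rfl⟩ := Finset.mem_image.mp hy
      rcases eq_or_ne x w with rfl | hne
      · exact Finset.mem_image.mpr ⟨v, Finset.mem_erase.mpr ⟨hvw, hv⟩, hgvw⟩
      · exact Finset.mem_image.mpr ⟨x, Finset.mem_erase.mpr ⟨hne, hx⟩, rfl⟩
    have hlt : rank (g ∘ f) < r := by
      calc rank (g ∘ f) = ((Finset.univ.image f).image g).card := by rw [rank, himg]
        _ ≤ (((Finset.univ.image f).erase w).image g).card := Finset.card_le_card hsub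
        _ ≤ ((Finset.univ.image f).erase w).card := Finset.card_image_le
        _ < (Finset.univ.image f).card := Finset.card_erase_lt_of_mem hw
        _ = r := hrf
    omega
  · rintro n ⟨t, ht⟩
    have hinj : Set.InjOn f t := by
      intro v hv w hw hfvw
      by_contra hne
      exact (ht.1 hv hw hne).2 f hf hfvw
    calc n = t.card := ht.2.symm
      _ = (t.image f).card := (Finset.card_image_of_injOn hinj).symm
      _ ≤ (Finset.univ.image f).card :=
          Finset.card_le_card (Finset.image_subset_image (Finset.subset_univ t))
      _ = r := hrf
end

section
/- Let S be a transformation semigroup on a finite set Ω and Gr(S) the associated graph. Then the chromatic number of Gr(S) equals the minimum rank of an element of S. -/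
open Finset

variable {Ω : Type*} [Fintype Ω] [DecidableEq Ω]

theorem stmt4 (S : Set (Ω → Ω)) (hS : ∀ f ∈ S, ∀ g ∈ S, (g ∘ f) ∈ S) (r : ℕ)
    (hr : ∃ f ∈ S, rank f = r) (hmin : ∀ f ∈ S, r ≤ rank f) :
    (Gr S).chromaticNumber = (r : ℕ∞) := by
  obtain ⟨f, hf, hfr⟩ := hr
  have hfr' : (univ.image f).card = r := hfr
  apply le_antisymm
  · rw [SimpleGraph.chromaticNumber_le_iff_colorable]
    have C : (Gr S).Coloring (univ.image f : Finset Ω) :=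
      ⟨fun v => ⟨f v, mem_image_of_mem f (mem_univ v)⟩,
       fun {v w} h => by simpa using h.2 f hf⟩
    have := C.colorable
    rwa [Fintype.card_coe, hfr'] at this
  · have hclique : (Gr S).IsClique (univ.image f : Finset Ω) := by
      intro x hx y hy hxy
      rw [mem_coe] at hx hy
      refine ⟨hxy, fun g hg hgxy => ?_⟩
      have hgf : r ≤ (univ.image (g ∘ f)).card := hmin (g ∘ f) (hS f hf g hg)
      have hlt : (univ.image (g ∘ f)).card < r := by
        have heq : univ.image (g ∘ f) = ((univ.image f).erase y).image g := by
          rw [← image_image]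
          apply Finset.Subset.antisymm
          · intro z hz
            rw [mem_image] at hz
            obtain ⟨u, hu, rfl⟩ := hz
            by_cases hu' : u = y
            · exact mem_image.mpr ⟨x, mem_erase.mpr ⟨hxy, hx⟩, by rw [hu']; exact hgxy⟩
            · exact mem_image.mpr ⟨u, mem_erase.mpr ⟨hu', hu⟩, rfl⟩
          · exact image_subset_image (erase_subset _ _)
        rw [heq]
        calc (((univ.image f).erase y).image g).card ≤ ((univ.image f).erase y).card :=
              card_image_le
          _ < (univ.image f).card := card_erase_lt_of_mem hy
          _ = r := hfr'
      exact absurd hgf (not_le.mpr hlt)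
    have := hclique.card_le_chromaticNumber
    rwa [hfr'] at this
end

section
/- If a primitive permutation group G on a finite set Ω contains a transposition, then G is the full symmetric group on Ω. -/
open Finset

variable {Ω : Type*} [Fintype Ω] [DecidableEq Ω]

private lemma coe_closure_mem {M : Type*} [Group M] (G : Subgroup M) (S : Set M) {k : G}
    (hk : k ∈ Subgroup.closure ((↑) ⁻¹' S : Set G)) : (k : M) ∈ Subgroup.closure S := by
  have h := MonoidHom.closure_preimage_le G.subtype S hk
  simpa [Subgroup.mem_subgroupOf] using h

private lemma swapClosure_normal {Ω : Type*} [DecidableEq Ω] (G : Subgroup (Equiv.Perm Ω)) :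
    (Subgroup.closure
      ((↑) ⁻¹' {σ : Equiv.Perm Ω | σ.IsSwap ∧ σ ∈ G} : Set G)).Normal := by
  set N := Subgroup.closure ((↑) ⁻¹' {σ : Equiv.Perm Ω | σ.IsSwap ∧ σ ∈ G} : Set G)
  constructor
  intro n hn g
  refine Subgroup.closure_induction
    (p := fun (m : G) (_ : m ∈ N) => g * m * g⁻¹ ∈ N) ?_ ?_ ?_ ?_ hn
  · intro x hx
    refine Subgroup.subset_closure ?_
    rcases hx.1 with ⟨x', y', hxy, hx'⟩
    refine ⟨?_, (g * x * g⁻¹ : G).2⟩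
    show ((g * x * g⁻¹ : G) : Equiv.Perm Ω).IsSwap
    push_cast
    rw [hx']
    refine ⟨(g : Equiv.Perm Ω) x', (g : Equiv.Perm Ω) y',
      fun h => hxy ((g : Equiv.Perm Ω).injective h),
      (Equiv.swap_apply_apply _ _ _).symm⟩
  · simpa using N.one_mem
  · intro x y _ _ hx hy
    have h : g * (x * y) * g⁻¹ = (g * x * g⁻¹) * (g * y * g⁻¹) := by group
    rw [h]; exact N.mul_mem hx hy
  · intro x _ hx
    have h : g * x⁻¹ * g⁻¹ = (g * x * g⁻¹)⁻¹ := by group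
    rw [h]; exact N.inv_mem hx

theorem stmt5 (G : Subgroup (Equiv.Perm Ω)) (hG : IsPrimitive G) {a b : Ω}
    (hab : a ≠ b) (hswap : Equiv.swap a b ∈ G) : G = ⊤ := by
  classical
  have hSswap : ∀ σ ∈ {σ : Equiv.Perm Ω | σ.IsSwap ∧ σ ∈ G}, σ.IsSwap := fun σ hσ => hσ.1
  have hSsub : {σ : Equiv.Perm Ω | σ.IsSwap ∧ σ ∈ G} ⊆ (G : Set (Equiv.Perm Ω)) :=
    fun σ hσ => hσ.2
  have hNnormal := swapClosure_normal G
  set N := Subgroup.closure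
    ((↑) ⁻¹' {σ : Equiv.Perm Ω | σ.IsSwap ∧ σ ∈ G} : Set G) with hN
  have hblock : MulAction.IsBlock G (MulAction.orbit N b) :=
    MulAction.IsBlock.orbit_of_normal b
  have hbmem : b ∈ MulAction.orbit N b := MulAction.mem_orbit_self b
  have hamem : a ∈ MulAction.orbit N b := by
    refine ⟨⟨⟨Equiv.swap a b, hswap⟩, Subgroup.subset_closure ⟨⟨a, b, hab, rfl⟩, hswap⟩⟩, ?_⟩
    show Equiv.swap a b • b = a; simp
  have horbit : MulAction.orbit N b = Set.univ := by
    rcases hG.2 _ hblock with h | h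
    · exact absurd (h hamem hbmem) hab
    · exact h
  have htrans : MulAction.IsPretransitive
      (Subgroup.closure {σ : Equiv.Perm Ω | σ.IsSwap ∧ σ ∈ G}) Ω := by
    constructor
    intro x y
    have hx : x ∈ MulAction.orbit N b := horbit ▸ Set.mem_univ x
    have hy : y ∈ MulAction.orbit N b := horbit ▸ Set.mem_univ y
    obtain ⟨⟨n, hn⟩, hnx⟩ := hx
    obtain ⟨⟨m, hm⟩, hmy⟩ := hy
    refine ⟨⟨(m : Equiv.Perm Ω) * (n : Equiv.Perm Ω)⁻¹,
      Subgroup.mul_mem _ (coe_closure_mem G _ hm)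
        (Subgroup.inv_mem _ (coe_closure_mem G _ hn))⟩, ?_⟩
    have hnx' : (n : Equiv.Perm Ω) b = x := hnx
    have hmy' : (m : Equiv.Perm Ω) b = y := hmy
    show ((m : Equiv.Perm Ω) * (n : Equiv.Perm Ω)⁻¹) x = y
    simp [← hnx', ← hmy']
  have hclosure : Subgroup.closure {σ : Equiv.Perm Ω | σ.IsSwap ∧ σ ∈ G} = ⊤ :=
    closure_of_isSwap_of_isPretransitive hSswap
  have hle : (⊤ : Subgroup (Equiv.Perm Ω)) ≤ G := by
    rw [← hclosure]
    exact (Subgroup.closure_le G).2 hSsub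
  exact le_antisymm le_top hle
end

section
/- Let X be a graph that is neither complete nor null, and let G ≤ Aut(X) be a primitive permutation group on the vertices of X. Then no two distinct vertices of X have the same neighbourhood. -/
open Finset

variable {Ω : Type*} [Fintype Ω] [DecidableEq Ω]

open scoped Pointwise

theorem stmt6 (X : SimpleGraph Ω) (hbot : X ≠ ⊥) (htop : X ≠ ⊤)
    (G : Subgroup (Equiv.Perm Ω)) (hprim : IsPrimitive G)
    (hAut : ∀ g ∈ G, ∀ v w : Ω, X.Adj v w → X.Adj (g v) (g w)) :
    ∀ a b : Ω, X.neighborSet a = X.neighborSet b → a = b := by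
  -- adjacency is preserved both ways
  have hiff : ∀ g ∈ G, ∀ v w : Ω, X.Adj v w ↔ X.Adj (g v) (g w) := by
    intro g hg v w
    refine ⟨hAut g hg v w, fun h => ?_⟩
    have := hAut g⁻¹ (G.inv_mem hg) _ _ h
    simpa using this
  -- same neighborhood is preserved
  have hsame : ∀ g ∈ G, ∀ x y : Ω, X.neighborSet x = X.neighborSet y →
      X.neighborSet (g x) = X.neighborSet (g y) := by
    intro g hg x y hxy
    ext z
    have h1 : z ∈ X.neighborSet (g x) ↔ g⁻¹ z ∈ X.neighborSet x := by
      simpa [SimpleGraph.mem_neighborSet] using (hiff g hg x (g⁻¹ z)).symm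
    have h2 : z ∈ X.neighborSet (g y) ↔ g⁻¹ z ∈ X.neighborSet y := by
      simpa [SimpleGraph.mem_neighborSet] using (hiff g hg y (g⁻¹ z)).symm
    rw [h1, h2, hxy]
  intro a b hab
  by_contra hne
  set B : Set Ω := {x | X.neighborSet x = X.neighborSet a} with hB
  have hblock : MulAction.IsBlock G B := by
    rw [MulAction.isBlock_iff_smul_eq_or_disjoint]
    intro g
    by_cases hd : Disjoint (g • B) B
    · exact Or.inr hd
    · left
      obtain ⟨x, hx1, hx2⟩ := Set.not_disjoint_iff.mp hd
      obtain ⟨x0, hx0, rfl⟩ := hx1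
      have hx0' : X.neighborSet x0 = X.neighborSet a := hx0
      have hgx : X.neighborSet ((g : Equiv.Perm Ω) x0) = X.neighborSet a := hx2
      ext z
      constructor
      · rintro ⟨z0, hz0, rfl⟩
        have : X.neighborSet z0 = X.neighborSet x0 := by
          rw [hz0, hx0']
        have := hsame (g : Equiv.Perm Ω) g.2 z0 x0 this
        show X.neighborSet ((g : Equiv.Perm Ω) z0) = X.neighborSet a
        rw [this, hgx]
      · intro hz
        refine ⟨(g : Equiv.Perm Ω)⁻¹ z, ?_, by simp [Subgroup.smul_def]⟩
        have hz' : X.neighborSet z = X.neighborSet ((g : Equiv.Perm Ω) x0) := by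
          rw [hgx]; exact hz
        have := hsame ((g : Equiv.Perm Ω)⁻¹) (G.inv_mem g.2) z ((g : Equiv.Perm Ω) x0) hz'
        show X.neighborSet _ = X.neighborSet a
        rw [this]; simpa using hx0'
  rcases hprim.2 B hblock with hs | hu
  · exact hne (hs hab.symm rfl).symm
  · -- every vertex has neighborhood N(a); show X = ⊥
    apply hbot
    ext v w
    simp only [SimpleGraph.bot_adj, iff_false]
    intro hvw
    have hv : X.neighborSet v = X.neighborSet a := by
      have : v ∈ B := by rw [hu]; trivial
      exact this
    have hw : X.neighborSet w = X.neighborSet a := by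
      have : w ∈ B := by rw [hu]; trivial
      exact this
    have : w ∈ X.neighborSet w := by
      rw [hw, ← hv]; exact hvw
    exact X.irrefl this
end

section
/- Let Γ be a non-null graph whose automorphism group contains a primitive group G, and suppose Γ has chromatic number r. Then Γ contains no subgraph isomorphic to the complete graph on r+1 vertices with one edge removed. -/
open Finset

variable {Ω : Type*} [Fintype Ω] [DecidableEq Ω]

theorem stmt7 (Γ : SimpleGraph Ω) (hne : Γ ≠ ⊥)
    (G : Subgroup (Equiv.Perm Ω)) (hprim : IsPrimitive G)
    (hAut : ∀ g ∈ G, ∀ v w : Ω, Γ.Adj v w → Γ.Adj (g v) (g w))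
    (r : ℕ) (hchrom : Γ.chromaticNumber = (r : ℕ∞)) :
    ¬ ∃ s : Finset Ω, ∃ a ∈ s, ∃ b ∈ s, a ≠ b ∧ s.card = r + 1 ∧
      ∀ x ∈ s, ∀ y ∈ s, x ≠ y → ¬(x = a ∧ y = b) → ¬(x = b ∧ y = a) → Γ.Adj x y := by
  rintro ⟨s, a, ha, b, hb, hab, hcard, hadj⟩
  -- Γ has an edge
  obtain ⟨v, w, hvw⟩ : ∃ v w, Γ.Adj v w := by
    by_contra h
    push_neg at h
    exact hne (by ext x y; simp [h x y])
  -- Γ is r-colorable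
  have hcol : Γ.Colorable r := by
    rw [← SimpleGraph.chromaticNumber_le_iff_colorable, hchrom]
  -- every r-coloring gives a and b the same color
  have key : ∀ c : Γ.Coloring (Fin r), c a = c b := by
    intro c
    by_contra hcab
    have hinj : Set.InjOn c s := by
      intro x hx y hy hxy
      by_contra hne'
      by_cases h1 : x = a ∧ y = b
      · exact hcab (h1.1 ▸ h1.2 ▸ hxy)
      by_cases h2 : x = b ∧ y = a
      · exact hcab (h2.2 ▸ h2.1 ▸ hxy.symm)
      exact c.valid (hadj x hx y hy hne' h1 h2) hxy
    have h1 : s.card ≤ (Finset.univ : Finset (Fin r)).card :=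
      Finset.card_le_card_of_injOn c (fun x _ => Finset.mem_univ _)
        (fun x hx y hy => hinj (Finset.mem_coe.mpr hx) (Finset.mem_coe.mpr hy))
    simp [hcard, Finset.card_univ] at h1
  -- the relation "same color in every r-coloring"
  set R : Ω → Ω → Prop := fun x y => ∀ c : Γ.Coloring (Fin r), c x = c y with hR
  -- G-invariance of R
  have hinv : ∀ g ∈ G, ∀ x y : Ω, R x y → R (g x) (g y) := by
    intro g hg x y hxy c
    exact hxy (SimpleGraph.Coloring.mk (fun z => c (g z))
      (fun {u} {u'} huu' => c.valid (hAut g hg u u' huu')))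
  -- the R-class of a is a block
  have hblock : MulAction.IsBlock G {x | R a x} := by
    rw [MulAction.isBlock_iff_smul_eq_of_mem]
    intro g z hz hgz
    have hgG : (g : Equiv.Perm Ω) ∈ G := g.2
    have hga : R a ((g : Equiv.Perm Ω) a) := by
      intro c
      have h1 := hinv g hgG a z hz c
      have h2 := hgz c
      simpa [Equiv.Perm.smul_def] using h2.trans h1.symm
    ext x
    simp only [Set.mem_smul_set_iff_inv_smul_mem, Set.mem_setOf_eq]
    constructor
    · intro hx c
      have h1 := hinv g hgG a ((g⁻¹ : G) • x) hx c
      have h2 := hga c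
      simpa [Equiv.Perm.smul_def, Subgroup.smul_def, Subgroup.coe_inv, Equiv.apply_symm_apply] using h2.trans h1
    · intro hx c
      have h1 := hinv (↑(g⁻¹ : G)) (g⁻¹ : G).2 a x hx c
      have h2 := hinv (↑(g⁻¹ : G)) (g⁻¹ : G).2 a ((g : Equiv.Perm Ω) a) hga c
      simpa [Equiv.Perm.smul_def, Subgroup.smul_def, Subgroup.coe_inv] using h2.symm.trans h1
  rcases hprim.2 _ hblock with hsub | huniv
  · exact hab (hsub (show R a a from fun c => rfl) (show R a b from key))
  · obtain ⟨c⟩ := hcol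
    have hv : R a v := Set.eq_univ_iff_forall.mp huniv v
    have hw : R a w := Set.eq_univ_iff_forall.mp huniv w
    exact c.valid hvw ((hv c).symm.trans (hw c))
end

section
/- Let G be a transitive permutation group on a finite set Ω and k > 1. Then G is imprimitive with a block of imprimitivity of size at least k if and only if G fails to synchronize some map f: Ω→Ω with kernel type (k,1,1,…,1). -/
open Finset

variable {Ω : Type*} [Fintype Ω] [DecidableEq Ω]

set_option linter.unusedSectionVars false
set_option maxHeartbeats 1000000

open Pointwise

namespace Stmt10T

variable {G : Subgroup (Equiv.Perm Ω)} {f : Ω → Ω}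

lemma mem_gen_f : f ∈ genSemigroup G f :=
  Subsemigroup.subset_closure (Or.inr rfl)

/-- A permutation as an element of `Function.End`. -/
def pe (g : Equiv.Perm Ω) : Function.End Ω := ⇑g

lemma mem_gen_perm (g : G) : pe (g : Equiv.Perm Ω) ∈ genSemigroup G f :=
  Subsemigroup.subset_closure (Or.inl ⟨g, g.2, rfl⟩)

/-- `f` as an element of `Function.End`. -/
def fe (f : Ω → Ω) : Function.End Ω := f

/-- the number of group elements sending `i` to `d` does not depend on `(i, d)`. -/
lemma cnt_const [Fintype G] (hG : MulAction.IsPretransitive G Ω) (i d i' d' : Ω) :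
    (univ.filter fun g : G => (g : Equiv.Perm Ω) i = d).card
      = (univ.filter fun g : G => (g : Equiv.Perm Ω) i' = d').card := by
  obtain ⟨t₁, ht₁⟩ := hG.exists_smul_eq i' i
  obtain ⟨t₂, ht₂⟩ := hG.exists_smul_eq d d'
  have ht₁' : (t₁ : Equiv.Perm Ω) i' = i := ht₁
  have ht₂' : (t₂ : Equiv.Perm Ω) d = d' := ht₂
  refine Finset.card_nbij' (fun g => t₂ * g * t₁) (fun g => t₂⁻¹ * g * t₁⁻¹) ?_ ?_ ?_ ?_
  · intro g hg
    simp only [Finset.mem_coe, mem_filter, mem_univ, true_and] at hg ⊢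
    simp [Subgroup.coe_mul, Equiv.Perm.mul_apply, ht₁', hg, ht₂']
  · intro g hg
    simp only [Finset.mem_coe, mem_filter, mem_univ, true_and] at hg ⊢
    have h1 : ((t₁ : Equiv.Perm Ω))⁻¹ i = i' := by rw [← ht₁']; simp
    have h2 : ((t₂ : Equiv.Perm Ω))⁻¹ d' = d := by rw [← ht₂']; simp
    simp [Subgroup.coe_mul, Equiv.Perm.mul_apply, h1, hg, h2]
  · intro g _; group
  · intro g _; group

lemma cnt_total [Fintype G] (i : Ω) :
    ∑ d : Ω, (univ.filter fun g : G => (g : Equiv.Perm Ω) i = d).card = Fintype.card G := by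
  rw [← Finset.card_univ (α := G)]
  exact (Finset.card_eq_sum_card_fiberwise
    (f := fun g : G => (g : Equiv.Perm Ω) i) (fun g _ => mem_univ _)).symm

set_option maxHeartbeats 2000000 in
lemma backward (hG : MulAction.IsPretransitive G Ω) {k : ℕ} (hk : 1 < k)
    (hker : KernelTypeK f k) (hns : ¬ Synchronizes G f) :
    ∃ B : Finset Ω, MulAction.IsBlock G (B : Set Ω) ∧ k ≤ B.card ∧ (B : Set Ω) ≠ Set.univ := by
  classical
  letI : Fintype G := Fintype.ofFinite G
  obtain ⟨A, hAk, hAc, hAker⟩ := hker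
  obtain ⟨a₀, ha₀⟩ : A.Nonempty := Finset.card_pos.mp (by omega)
  set astar := f a₀ with hastar
  set Imf : Finset Ω := univ.image f with hImf
  have hastarImf : astar ∈ Imf := mem_image_of_mem f (mem_univ a₀)
  have hfibA : univ.filter (fun x => f x = astar) = A := by
    ext x
    simp only [mem_filter, mem_univ, true_and]
    constructor
    · intro hx
      rcases hAker x a₀ hx with rfl | ⟨h, _⟩
      · exact ha₀
      · exact h
    · intro hx; exact hAc x hx a₀ ha₀
  have hfib1 : ∀ z ∈ Imf, z ≠ astar → (univ.filter (fun x => f x = z)).card = 1 := by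
    intro z hz hzne
    obtain ⟨x₀, _, rfl⟩ := mem_image.mp hz
    rw [Finset.card_eq_one]
    refine ⟨x₀, ?_⟩
    ext x
    simp only [mem_filter, mem_univ, true_and, mem_singleton]
    constructor
    · intro hx
      rcases hAker x x₀ hx with h | ⟨h1, h2⟩
      · exact h
      · exact absurd (hAc x₀ h2 a₀ ha₀) hzne
    · rintro rfl; rfl
  have himage : (Imf.erase astar).card + k = (univ : Finset Ω).card := by
    have h1 : (univ : Finset Ω).card = ∑ z ∈ Imf, (univ.filter fun x => f x = z).card :=
      Finset.card_eq_sum_card_fiberwise (fun x _ => mem_image_of_mem f (mem_univ x))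
    rw [← Finset.sum_erase_add _ _ hastarImf, hfibA, hAk] at h1
    rw [Finset.sum_congr rfl (fun z hz => hfib1 z (Finset.mem_of_mem_erase hz)
        (Finset.ne_of_mem_erase hz))] at h1
    rw [Finset.sum_const, smul_eq_mul, mul_one] at h1
    omega
  set Fst : Finset Ω := insert astar (univ \ Imf) with hFst
  have hFcard : Fst.card = k := by
    have h2 : (univ \ Imf).card + Imf.card = (univ : Finset Ω).card :=
      Finset.card_sdiff_add_card_eq_card (subset_univ _)
    have h3 : Imf.card = (Imf.erase astar).card + 1 := (Finset.card_erase_add_one hastarImf).symm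
    have h4 : astar ∉ univ \ Imf := by simp [hastarImf]
    rw [hFst, Finset.card_insert_of_notMem h4]
    omega
  -- the semigroup and the minimal rank
  have hfS : f ∈ genSemigroup G f := mem_gen_f
  have hranksne : Set.Nonempty {m | ∃ u ∈ genSemigroup G f, rank u = m} := ⟨rank f, f, hfS, rfl⟩
  set r := sInf {m | ∃ u ∈ genSemigroup G f, rank u = m} with hrdef
  obtain ⟨h₀, hh₀S, hh₀r⟩ : ∃ u ∈ genSemigroup G f, rank u = r := Nat.sInf_mem hranksne
  have hmin : ∀ u ∈ genSemigroup G f, r ≤ rank u := fun u hu => Nat.sInf_le ⟨u, hu, rfl⟩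
  have hr2 : 2 ≤ r := by
    by_contra hlt
    have h1 : rank h₀ ≠ 0 := by
      intro h0
      have hne0 : (univ.image h₀).Nonempty := ⟨h₀ a₀, mem_image_of_mem _ (mem_univ _)⟩
      rw [show rank h₀ = (univ.image h₀).card from rfl, Finset.card_eq_zero] at h0
      exact hne0.ne_empty h0
    have h2 : (univ.image h₀).card = 1 := by
      have : rank h₀ = (univ.image h₀).card := rfl
      omega
    obtain ⟨c, hc⟩ := Finset.card_eq_one.mp h2
    exact hns ⟨h₀, hh₀S, c, fun x => by
      have hx : h₀ x ∈ univ.image h₀ := mem_image_of_mem _ (mem_univ x)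
      rw [hc] at hx; exact Finset.mem_singleton.mp hx⟩
  set I : Finset Ω := univ.image h₀ with hI
  have hIcard : I.card = r := hh₀r
  have hgIcard : ∀ g : G, (I.image ⇑(g : Equiv.Perm Ω)).card = r := by
    intro g
    rw [Finset.card_image_of_injective _ (Equiv.injective _)]
    exact hIcard
  have step : ∀ u ∈ genSemigroup G f, rank u = r → ∀ g : G,
      ((I.image ⇑(g : Equiv.Perm Ω)).image u).card = r := by
    intro u hu hur g
    have hw : (u * pe (g : Equiv.Perm Ω)) * h₀ ∈ genSemigroup G f :=
      mul_mem (mul_mem hu (mem_gen_perm g)) hh₀S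
    have him : univ.image ((u * pe (g : Equiv.Perm Ω)) * h₀)
        = (I.image ⇑(g : Equiv.Perm Ω)).image u := by
      rw [hI]
      ext y
      constructor
      · intro hy
        obtain ⟨x, _, rfl⟩ := Finset.mem_image.mp hy
        exact Finset.mem_image.mpr ⟨_, Finset.mem_image.mpr
          ⟨_, Finset.mem_image.mpr ⟨x, mem_univ x, rfl⟩, rfl⟩, rfl⟩
      · intro hy
        obtain ⟨_, h1, rfl⟩ := Finset.mem_image.mp hy
        obtain ⟨_, h2, rfl⟩ := Finset.mem_image.mp h1
        obtain ⟨x, _, rfl⟩ := Finset.mem_image.mp h2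
        exact Finset.mem_image.mpr ⟨x, mem_univ x, rfl⟩
    have hge := hmin _ hw
    rw [show rank ((u * pe (g : Equiv.Perm Ω)) * h₀) = (univ.image ((u * pe (g : Equiv.Perm Ω)) * h₀)).card from rfl, him] at hge
    have hle : ((I.image ⇑(g : Equiv.Perm Ω)).image u).card ≤ r :=
      le_trans Finset.card_image_le (le_of_eq (hgIcard g))
    omega
  have injOn : ∀ u ∈ genSemigroup G f, rank u = r → ∀ g : G,
      Set.InjOn u (I.image ⇑(g : Equiv.Perm Ω)) := by
    intro u hu hur g
    exact Finset.card_image_iff.mp (by rw [step u hu hur g, hgIcard g])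
  have imeq : ∀ u ∈ genSemigroup G f, rank u = r → ∀ g : G,
      (I.image ⇑(g : Equiv.Perm Ω)).image u = univ.image u := by
    intro u hu hur g
    apply Finset.eq_of_subset_of_card_le
    · intro y hy
      obtain ⟨x, _, rfl⟩ := mem_image.mp hy
      exact mem_image_of_mem u (mem_univ x)
    · rw [step u hu hur g]
      exact le_of_eq hur
  have transv : ∀ u ∈ genSemigroup G f, rank u = r → ∀ y ∈ univ.image u, ∀ g : G,
      ((univ.filter fun x => u x = y).filter
        (fun d => d ∈ I.image ⇑(g : Equiv.Perm Ω))).card = 1 := by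
    intro u hu hur y hy g
    have h1 : y ∈ (I.image ⇑(g : Equiv.Perm Ω)).image u := by
      rw [imeq u hu hur g]; exact hy
    obtain ⟨d, hd, hdy⟩ := mem_image.mp h1
    rw [Finset.card_eq_one]
    refine ⟨d, ?_⟩
    ext x
    simp only [mem_filter, mem_univ, true_and, mem_singleton]
    constructor
    · rintro ⟨hxy, hxg⟩
      exact injOn u hu hur g (Finset.mem_coe.mpr hxg) (Finset.mem_coe.mpr hd)
        (hxy.trans hdy.symm)
    · rintro rfl; exact ⟨hdy, hd⟩
  -- group counting
  set sc := (univ.filter fun g : G => (g : Equiv.Perm Ω) a₀ = a₀).card with hsc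
  have hscpos : 0 < sc := Finset.card_pos.mpr ⟨1, by simp⟩
  have hGcard : Fintype.card G = (univ : Finset Ω).card * sc := by
    rw [← cnt_total (G := G) a₀]
    rw [Finset.sum_congr rfl (fun d _ => cnt_const hG a₀ d a₀ a₀), Finset.sum_const,
      smul_eq_mul, Finset.card_univ]
  have fibcard : ∀ u ∈ genSemigroup G f, rank u = r → ∀ y ∈ univ.image u,
      (univ.filter fun x => u x = y).card * r = (univ : Finset Ω).card := by
    intro u hu hur y hy
    set D := univ.filter fun x => u x = y with hD
    have hsum1 : ∑ g : G, (D.filter (fun d => d ∈ I.image ⇑(g : Equiv.Perm Ω))).card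
        = Fintype.card G := by
      rw [Finset.sum_congr rfl (fun g _ => transv u hu hur y hy g), Finset.sum_const,
        smul_eq_mul, mul_one, Finset.card_univ]
    have hswap : ∑ g : G, (D.filter (fun d => d ∈ I.image ⇑(g : Equiv.Perm Ω))).card
        = ∑ d ∈ D, (univ.filter (fun g : G => d ∈ I.image ⇑(g : Equiv.Perm Ω))).card := by
      simp_rw [Finset.card_filter]
      rw [Finset.sum_comm]
    have hinner : ∀ d : Ω,
        (univ.filter (fun g : G => d ∈ I.image ⇑(g : Equiv.Perm Ω))).card = r * sc := by
      intro d
      have hbu : univ.filter (fun g : G => d ∈ I.image ⇑(g : Equiv.Perm Ω))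
          = I.biUnion (fun i => univ.filter (fun g : G => (g : Equiv.Perm Ω) i = d)) := by
        ext g
        simp only [mem_filter, mem_univ, true_and, mem_biUnion, Finset.mem_image]
      rw [hbu, Finset.card_biUnion]
      · rw [Finset.sum_congr rfl (fun i _ => cnt_const hG i d a₀ a₀), Finset.sum_const,
          smul_eq_mul, hIcard]
      · intro i hi j hj hij
        rw [Function.onFun, Finset.disjoint_left]
        intro g hg1 hg2
        simp only [mem_filter, mem_univ, true_and] at hg1 hg2
        exact hij ((g : Equiv.Perm Ω).injective (hg1.trans hg2.symm))
    have hmain : D.card * (r * sc) = (univ : Finset Ω).card * sc := by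
      rw [← hGcard, ← hsum1, hswap]
      rw [Finset.sum_congr rfl (fun d _ => hinner d), Finset.sum_const, smul_eq_mul]
    have : (D.card * r) * sc = (univ : Finset Ω).card * sc := by
      rw [mul_assoc]; exact hmain
    exact Nat.eq_of_mul_eq_mul_right hscpos this
  -- multiplying by f on the right preserves minimality and the image
  have hsubimage : ∀ u : Function.End Ω, univ.image (u * fe f) ⊆ univ.image u := by
    intro u y hy
    obtain ⟨x, _, rfl⟩ := mem_image.mp hy
    exact mem_image_of_mem u (mem_univ (f x))
  have hmulf : ∀ u ∈ genSemigroup G f, rank u = r →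
      univ.image (u * fe f) = univ.image u ∧ rank (u * fe f) = r := by
    intro u hu hur
    have h1 : rank (u * fe f) ≤ r := by
      calc rank (u * fe f) = (univ.image (u * fe f)).card := rfl
        _ ≤ (univ.image u).card := Finset.card_le_card (hsubimage u)
        _ = r := hur
    have h2 : r ≤ rank (u * fe f) := hmin _ (mul_mem hu hfS)
    have h3 : rank (u * fe f) = r := le_antisymm h1 h2
    exact ⟨Finset.eq_of_subset_of_card_le (hsubimage u) (le_of_eq (hur.trans h3.symm)), h3⟩
  -- the core lemma : every minimal-rank element collapses Ω \ Im f with astar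
  have core : ∀ u ∈ genSemigroup G f, rank u = r → ∀ z, z ∉ Imf → u z = u astar := by
    intro u hu hur z hz
    by_contra hne'
    have hyIm : u z ∈ univ.image u := mem_image_of_mem u (mem_univ z)
    obtain ⟨himeq, hvr⟩ := hmulf u hu hur
    have hyImv : u z ∈ univ.image (u * fe f) := by rw [himeq]; exact hyIm
    have e1 := fibcard u hu hur (u z) hyIm
    have e2 := fibcard (u * fe f) (mul_mem hu hfS) hvr (u z) hyImv
    have hsize : (univ.filter fun x => (u * fe f) x = u z).card
        = (univ.filter fun x => u x = u z).card :=
      Nat.eq_of_mul_eq_mul_right (by omega : 0 < r) (by convert e2.trans e1.symm)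
    have hinj : Set.InjOn f (univ.filter fun x => (u * fe f) x = u z) := by
      intro x hx x' hx' hfx
      rcases hAker x x' hfx with h | ⟨h1, _⟩
      · exact h
      · exfalso
        have hxa : (u * fe f) x = u astar := by
          show u (f x) = u astar
          rw [hAc x h1 a₀ ha₀]
        rw [Finset.mem_coe, mem_filter] at hx
        exact hne' (hx.2.symm.trans hxa)
    have himg : (univ.filter fun x => (u * fe f) x = u z).image f
        ⊆ (univ.filter fun x => u x = u z).filter (fun d => d ∈ Imf) := by
      intro d hd
      obtain ⟨x, hx, rfl⟩ := mem_image.mp hd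
      rw [mem_filter] at hx
      exact mem_filter.mpr ⟨mem_filter.mpr ⟨mem_univ _, hx.2⟩,
        mem_image_of_mem f (mem_univ x)⟩
    have hcard2 : (univ.filter fun x => u x = u z).card
        ≤ ((univ.filter fun x => u x = u z).filter (fun d => d ∈ Imf)).card := by
      calc (univ.filter fun x => u x = u z).card
          = (univ.filter fun x => (u * fe f) x = u z).card := hsize.symm
        _ = ((univ.filter fun x => (u * fe f) x = u z).image f).card :=
            (Finset.card_image_of_injOn hinj).symm
        _ ≤ _ := Finset.card_le_card himg
    have hfull := Finset.eq_of_subset_of_card_le (Finset.filter_subset _ _) hcard2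
    have hzD : z ∈ univ.filter fun x => u x = u z := mem_filter.mpr ⟨mem_univ z, rfl⟩
    have : z ∈ (univ.filter fun x => u x = u z).filter (fun d => d ∈ Imf) := by
      rw [hfull]; exact hzD
    exact hz (mem_filter.mp this).2
  have coreF : ∀ u ∈ genSemigroup G f, rank u = r → ∀ w ∈ Fst, ∀ w' ∈ Fst, u w = u w' := by
    have haux : ∀ u ∈ genSemigroup G f, rank u = r → ∀ w ∈ Fst, u w = u astar := by
      intro u hu hur w hw
      rcases Finset.mem_insert.mp hw with rfl | hw'
      · rfl
      · exact core u hu hur w (Finset.mem_sdiff.mp hw').2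
    intro u hu hur w hw w' hw'
    rw [haux u hu hur w hw, haux u hu hur w' hw']
  -- the relation
  set R : Ω → Ω → Prop := fun x y => ∃ g : G,
    x ∈ Fst.image ⇑(g : Equiv.Perm Ω) ∧ y ∈ Fst.image ⇑(g : Equiv.Perm Ω) with hR
  have hRkey : ∀ x y, R x y → h₀ x = h₀ y := by
    rintro x y ⟨g, hx, hy⟩
    obtain ⟨w, hw, rfl⟩ := mem_image.mp hx
    obtain ⟨w', hw', rfl⟩ := mem_image.mp hy
    have hu : (h₀ * pe (g : Equiv.Perm Ω)) ∈ genSemigroup G f :=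
      mul_mem hh₀S (mem_gen_perm g)
    have hur : rank (h₀ * pe (g : Equiv.Perm Ω)) = r := by
      have h1 : univ.image ((h₀ * pe (g : Equiv.Perm Ω)))
          = (univ.image ⇑(g : Equiv.Perm Ω)).image h₀ := by
        ext y
        constructor
        · intro hy
          obtain ⟨x, _, rfl⟩ := Finset.mem_image.mp hy
          exact Finset.mem_image.mpr ⟨_, Finset.mem_image.mpr ⟨x, mem_univ x, rfl⟩, rfl⟩
        · intro hy
          obtain ⟨_, h1, rfl⟩ := Finset.mem_image.mp hy
          obtain ⟨x, _, rfl⟩ := Finset.mem_image.mp h1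
          exact Finset.mem_image.mpr ⟨x, mem_univ x, rfl⟩
      have h2 : univ.image ⇑(g : Equiv.Perm Ω) = univ :=
        Finset.image_univ_equiv (g : Equiv.Perm Ω)
      show (univ.image ((h₀ * pe (g : Equiv.Perm Ω)))).card = r
      rw [h1, h2]
      exact hIcard
    exact coreF _ hu hur w hw w' hw'
  have hRrefl : ∀ x, R x x := by
    intro x
    obtain ⟨g, hg⟩ := hG.exists_smul_eq astar x
    have hg' : (g : Equiv.Perm Ω) astar = x := hg
    exact ⟨g, mem_image.mpr ⟨astar, Finset.mem_insert_self _ _, hg'⟩,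
      mem_image.mpr ⟨astar, Finset.mem_insert_self _ _, hg'⟩⟩
  have hEinv : ∀ (g : G) (x y : Ω), Relation.EqvGen R x y →
      Relation.EqvGen R ((g : Equiv.Perm Ω) x) ((g : Equiv.Perm Ω) y) := by
    intro g x y hxy
    induction hxy with
    | rel a b hab =>
      obtain ⟨g', h1, h2⟩ := hab
      refine Relation.EqvGen.rel _ _ ⟨g * g', ?_, ?_⟩
      · obtain ⟨w, hw, rfl⟩ := mem_image.mp h1
        exact mem_image.mpr ⟨w, hw, by simp [Subgroup.coe_mul, Equiv.Perm.mul_apply]⟩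
      · obtain ⟨w, hw, rfl⟩ := mem_image.mp h2
        exact mem_image.mpr ⟨w, hw, by simp [Subgroup.coe_mul, Equiv.Perm.mul_apply]⟩
    | refl a => exact Relation.EqvGen.refl _
    | symm a b _ ih => exact Relation.EqvGen.symm _ _ ih
    | trans a b c _ _ ih1 ih2 => exact Relation.EqvGen.trans _ _ _ ih1 ih2
  set Bf : Finset Ω := univ.filter (fun y => Relation.EqvGen R astar y) with hBf
  have hBmem : ∀ y, y ∈ Bf ↔ Relation.EqvGen R astar y := by
    intro y; rw [hBf, mem_filter]; simp
  have hsmulB : ∀ g : G, g • (Bf : Set Ω)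
      = {y | Relation.EqvGen R ((g : Equiv.Perm Ω) astar) y} := by
    intro g
    ext y
    rw [Set.mem_smul_set_iff_inv_smul_mem]
    have hcoe : (g⁻¹ : G) • y = ((g : Equiv.Perm Ω))⁻¹ y := rfl
    constructor
    · intro hy
      rw [hcoe] at hy
      have hy' : Relation.EqvGen R astar (((g : Equiv.Perm Ω))⁻¹ y) :=
        (hBmem _).mp (Finset.mem_coe.mp hy)
      have := hEinv g _ _ hy'
      simpa using this
    · intro hy
      have := hEinv g⁻¹ _ _ hy
      rw [hcoe]
      refine Finset.mem_coe.mpr ((hBmem _).mpr ?_)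
      have hco : ((g⁻¹ : G) : Equiv.Perm Ω) = ((g : Equiv.Perm Ω))⁻¹ := rfl
      rw [hco] at this
      simpa using this
  have hnc : ∃ z, h₀ z ≠ h₀ astar := by
    by_contra hzc
    push_neg at hzc
    have hsub : univ.image h₀ ⊆ {h₀ astar} := by
      intro y hy
      obtain ⟨x, _, rfl⟩ := mem_image.mp hy
      simp [hzc x]
    have hle := Finset.card_le_card hsub
    rw [Finset.card_singleton] at hle
    have : I.card = (univ.image h₀).card := rfl
    omega
  obtain ⟨z, hzne⟩ := hnc
  have hEkey : ∀ x y, Relation.EqvGen R x y → h₀ x = h₀ y := by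
    intro x y hxy
    induction hxy with
    | rel a b hab => exact hRkey a b hab
    | refl a => rfl
    | symm a b _ ih => exact ih.symm
    | trans a b c _ _ ih1 ih2 => exact ih1.trans ih2
  refine ⟨Bf, ?_, ?_, ?_⟩
  · rw [MulAction.isBlock_iff_smul_eq_smul_of_nonempty]
    intro g₁ g₂ hne'
    obtain ⟨w, hw1, hw2⟩ := hne'
    rw [hsmulB g₁] at hw1 ⊢
    rw [hsmulB g₂] at hw2 ⊢
    have h12 : Relation.EqvGen R ((g₁ : Equiv.Perm Ω) astar) ((g₂ : Equiv.Perm Ω) astar) :=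
      Relation.EqvGen.trans _ _ _ hw1 (Relation.EqvGen.symm _ _ hw2)
    ext y
    constructor
    · intro hy
      exact Relation.EqvGen.trans _ _ _ (Relation.EqvGen.symm _ _ h12) hy
    · intro hy
      exact Relation.EqvGen.trans _ _ _ h12 hy
  · have hFB : Fst ⊆ Bf := by
      intro w hw
      rw [hBmem]
      refine Relation.EqvGen.rel _ _ ⟨1, ?_, ?_⟩
      · exact mem_image.mpr ⟨astar, Finset.mem_insert_self _ _, by simp⟩
      · exact mem_image.mpr ⟨w, hw, by simp⟩
    calc k = Fst.card := hFcard.symm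
      _ ≤ Bf.card := Finset.card_le_card hFB
  · intro huniv
    have hzB : z ∈ Bf := by
      have : Bf = univ := Finset.coe_eq_univ.mp huniv
      rw [this]; exact mem_univ z
    exact hzne ((hEkey _ _ ((hBmem z).mp hzB)).symm)

lemma forward (hG : MulAction.IsPretransitive G Ω) {k : ℕ} (hk : 1 < k)
    (B : Finset Ω) (hB : MulAction.IsBlock G (B : Set Ω)) (hcard : k ≤ B.card)
    (hne : (B : Set Ω) ≠ Set.univ) :
    ∃ f : Ω → Ω, KernelTypeK f k ∧ ¬ Synchronizes G f := by
  classical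
  obtain ⟨A, hAB, hAcard⟩ := Finset.exists_subset_card_eq hcard
  have hA0 : A.Nonempty := Finset.card_pos.mp (by omega)
  obtain ⟨a₀, ha₀⟩ := hA0
  refine ⟨fun x => if x ∈ A then a₀ else x, ⟨A, hAcard, ?_, ?_⟩, ?_⟩
  · intro x hx y hy; simp [hx, hy]
  · intro x y hxy
    by_cases hx : x ∈ A <;> by_cases hy : y ∈ A
    · exact Or.inr ⟨hx, hy⟩
    · simp only [if_pos hx, if_neg hy] at hxy
      exact absurd (hxy ▸ ha₀) hy
    · simp only [if_neg hx, if_pos hy] at hxy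
      exact absurd (hxy.symm ▸ ha₀) hx
    · simp only [if_neg hx, if_neg hy] at hxy
      exact Or.inl hxy
  · set f : Ω → Ω := fun x => if x ∈ A then a₀ else x with hfdef
    rintro ⟨h, hS, c, hc⟩
    set Bs : Set Ω := (B : Set Ω) with hBs
    obtain ⟨b₀, hb₀⟩ : B.Nonempty := Finset.card_pos.mp (by omega)
    have cov : ∀ x : Ω, ∃ g : G, x ∈ g • Bs := by
      intro x
      obtain ⟨g, hg⟩ := hG.exists_smul_eq b₀ x
      exact ⟨g, Set.mem_smul_set.mpr ⟨b₀, Finset.mem_coe.mpr hb₀, hg⟩⟩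
    have eqd : ∀ (g₁ g₂ : G) (x : Ω), x ∈ g₁ • Bs → x ∈ g₂ • Bs → g₁ • Bs = g₂ • Bs := by
      intro g₁ g₂ x h1 h2
      by_contra hne'
      exact Set.disjoint_left.mp (hB hne') h1 h2
    set R : Ω → Ω → Prop := fun x y => ∃ g : G, x ∈ g • Bs ∧ y ∈ g • Bs with hR
    have Rrefl : ∀ x, R x x := fun x => (cov x).elim fun g hg => ⟨g, hg, hg⟩
    have Rsymm : ∀ {x y}, R x y → R y x := fun ⟨g, h1, h2⟩ => ⟨g, h2, h1⟩
    have Rtrans : ∀ {x y z}, R x y → R y z → R x z := by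
      rintro x y z ⟨g1, hx, hy⟩ ⟨g2, hy', hz⟩
      exact ⟨g2, (eqd g1 g2 y hy hy') ▸ hx, hz⟩
    have RfA : ∀ x, R x (f x) := by
      intro x
      by_cases hx : x ∈ A
      · refine ⟨1, ?_, ?_⟩ <;> rw [one_smul]
        · exact Finset.mem_coe.mpr (hAB hx)
        · simp only [hfdef, if_pos hx]
          exact Finset.mem_coe.mpr (hAB ha₀)
      · simp only [hfdef, if_neg hx]
        exact Rrefl x
    have inv : ∀ u ∈ genSemigroup G f, ∀ x y, R (u x) (u y) → R x y := by
      intro u hu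
      induction hu using Subsemigroup.closure_induction with
      | mem z hz =>
        rcases hz with ⟨g, hgG, rfl⟩ | hz
        · intro x y hxy
          obtain ⟨g', h1, h2⟩ := hxy
          set gg : G := ⟨g, hgG⟩ with hgg
          refine ⟨gg⁻¹ * g', ?_, ?_⟩
          · rw [mul_smul, Set.mem_inv_smul_set_iff]; exact h1
          · rw [mul_smul, Set.mem_inv_smul_set_iff]; exact h2
        · have hz : z = f := hz
          subst hz
          intro x y hxy
          exact Rtrans (RfA x) (Rtrans hxy (Rsymm (RfA y)))
      | mul a b ha hb iha ihb =>
        intro x y hxy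
        exact ihb x y (iha (b x) (b y) hxy)
    have hall : ∀ y, y ∈ Bs := by
      intro y
      have h1 : R (h b₀) (h y) := by rw [hc b₀, hc y]; exact Rrefl c
      obtain ⟨g, hb, hy⟩ := inv h hS b₀ y h1
      have hb1 : b₀ ∈ (1 : G) • Bs := by rw [one_smul]; exact Finset.mem_coe.mpr hb₀
      have := eqd g 1 b₀ hb hb1
      rw [this, one_smul] at hy
      exact hy
    exact hne (Set.eq_univ_iff_forall.mpr hall)


end Stmt10T



open Pointwise in
theorem stmt10 (G : Subgroup (Equiv.Perm Ω)) (hG : MulAction.IsPretransitive G Ω)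
    (k : ℕ) (hk : 1 < k) :
    (∃ B : Finset Ω, MulAction.IsBlock G (B : Set Ω) ∧ k ≤ B.card ∧ (B : Set Ω) ≠ Set.univ) ↔
      ∃ f : Ω → Ω, KernelTypeK f k ∧ ¬ Synchronizes G f := by
  constructor
  · rintro ⟨B, hB, hcard, hne⟩
    exact Stmt10T.forward hG hk B hB hcard hne
  · rintro ⟨f, hker, hns⟩
    exact Stmt10T.backward hG hk hker hns
end

section
/- Every primitive permutation group G on a finite set Ω synchronizes every map f: Ω→Ω whose kernel has exactly one non-singleton class (kernel type (k,1,…,1) for some k ≥ 2). -/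
open Finset

variable {Ω : Type*} [Fintype Ω] [DecidableEq Ω]

def toEnd {Ω : Type*} (g : Ω → Ω) : Function.End Ω := g

private def Ncnt {Ω : Type*} [Fintype Ω] [DecidableEq Ω] (G : Subgroup (Equiv.Perm Ω))
    [Fintype G] (x c : Ω) : ℕ :=
  ((Finset.univ : Finset G).filter (fun g : G => (g : Equiv.Perm Ω) x = c)).card

lemma count_aux {Ω : Type*} [Fintype Ω] [DecidableEq Ω] (G : Subgroup (Equiv.Perm Ω))
    (htr : MulAction.IsPretransitive G Ω) (X C : Finset Ω)
    (hXC : ∀ g : G, (X.filter fun x => (g : Equiv.Perm Ω) x ∈ C).card = 1) :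
    X.card * C.card = Fintype.card Ω := by
  classical
  haveI := htr
  have step1 : ∀ x : Ω, ∑ c : Ω, Ncnt G x c = Fintype.card G := by
    intro x
    rw [← Finset.card_univ]
    exact (Finset.card_eq_sum_card_fiberwise
      (f := fun g : G => (g : Equiv.Perm Ω) x) (fun g _ => Finset.mem_univ _)).symm
  have step2 : ∀ x c c', Ncnt G x c = Ncnt G x c' := by
    intro x c c'
    obtain ⟨g₁, hg₁⟩ := MulAction.exists_smul_eq G c c'
    have hg₁' : (g₁ : Equiv.Perm Ω) c = c' := hg₁
    unfold Ncnt
    apply Finset.card_bij' (fun g _ => g₁ * g) (fun g _ => g₁⁻¹ * g)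
    · intro g hg
      simp only [Finset.mem_filter, Finset.mem_univ, true_and] at hg ⊢
      rw [Subgroup.coe_mul, Equiv.Perm.mul_apply, hg, hg₁']
    · intro g hg
      simp only [Finset.mem_filter, Finset.mem_univ, true_and] at hg ⊢
      rw [Subgroup.coe_mul, Equiv.Perm.mul_apply, hg, ← hg₁']
      simp
    · intro g _; group
    · intro g _; group
  have step3 : ∀ x c, Fintype.card Ω * Ncnt G x c = Fintype.card G := by
    intro x c
    rw [← step1 x]
    rw [Finset.sum_congr rfl (fun c' _ => step2 x c' c), Finset.sum_const, Finset.card_univ,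
      smul_eq_mul]
  have hGpos : 0 < Fintype.card G := Fintype.card_pos
  have main : ∑ x ∈ X, ∑ c ∈ C, Ncnt G x c = Fintype.card G := by
    have lhs : ∑ g : G, (X.filter fun x => (g : Equiv.Perm Ω) x ∈ C).card
        = Fintype.card G := by simp [hXC]
    rw [← lhs]
    have e2 : ∀ x : Ω, ((Finset.univ : Finset G).filter (fun g : G =>
        (g : Equiv.Perm Ω) x ∈ C)).card = ∑ c ∈ C, Ncnt G x c := by
      intro x
      rw [Finset.card_eq_sum_card_fiberwise (f := fun g : G => (g : Equiv.Perm Ω) x)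
        (s := (Finset.univ : Finset G).filter (fun g : G => (g : Equiv.Perm Ω) x ∈ C)) (t := C)
        (fun g hg => (Finset.mem_filter.mp hg).2)]
      apply Finset.sum_congr rfl
      intro c hc
      unfold Ncnt
      congr 1
      rw [Finset.filter_filter]
      apply Finset.filter_congr
      intro g _
      constructor
      · exact fun h => h.2
      · exact fun h => ⟨h ▸ hc, h⟩
    calc ∑ x ∈ X, ∑ c ∈ C, Ncnt G x c
        = ∑ x ∈ X, ((Finset.univ : Finset G).filter (fun g : G =>
            (g : Equiv.Perm Ω) x ∈ C)).card := by
          exact Finset.sum_congr rfl (fun x _ => (e2 x).symm)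
      _ = ∑ x ∈ X, ∑ g : G, (if (g : Equiv.Perm Ω) x ∈ C then 1 else 0) := by
          exact Finset.sum_congr rfl (fun x _ => Finset.card_filter _ _)
      _ = ∑ g : G, ∑ x ∈ X, (if (g : Equiv.Perm Ω) x ∈ C then 1 else 0) := Finset.sum_comm
      _ = ∑ g : G, (X.filter fun x => (g : Equiv.Perm Ω) x ∈ C).card := by
          exact Finset.sum_congr rfl (fun g _ => (Finset.card_filter _ _).symm)
  have final : (X.card * C.card) * Fintype.card G = Fintype.card Ω * Fintype.card G := by
    calc (X.card * C.card) * Fintype.card G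
        = ∑ x ∈ X, ∑ c ∈ C, Fintype.card G := by
          simp [Finset.sum_const, mul_assoc]
      _ = ∑ x ∈ X, ∑ c ∈ C, Fintype.card Ω * Ncnt G x c := by
          exact Finset.sum_congr rfl (fun x _ => Finset.sum_congr rfl (fun c _ => (step3 x c).symm))
      _ = Fintype.card Ω * ∑ x ∈ X, ∑ c ∈ C, Ncnt G x c := by
          rw [Finset.mul_sum]
          exact Finset.sum_congr rfl (fun x _ => (Finset.mul_sum _ _ _).symm)
      _ = Fintype.card Ω * Fintype.card G := by rw [main]
  exact Nat.eq_of_mul_eq_mul_right hGpos final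

theorem stmt11 (G : Subgroup (Equiv.Perm Ω)) (hG : IsPrimitive G) (f : Ω → Ω)
    (hf : ∃ k : ℕ, 2 ≤ k ∧ KernelTypeK f k) : Synchronizes G f := by
  classical
  obtain ⟨k, hk2, A, hAcard, hAcoll, hAker⟩ := hf
  by_contra hsync
  set S := genSemigroup G f with hS
  have hfS : f ∈ S := Subsemigroup.subset_closure (Or.inr rfl)
  have hgS : ∀ g : G, toEnd ⇑(g : Equiv.Perm Ω) ∈ S :=
    fun g => Subsemigroup.subset_closure (Or.inl ⟨g, g.2, rfl⟩)
  have hAne : A.Nonempty := Finset.card_pos.mp (by omega)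
  obtain ⟨a, haA⟩ := hAne
  haveI : Nonempty Ω := ⟨a⟩
  -- every element of S has rank ≥ 2
  have hrank2 : ∀ s ∈ S, 2 ≤ rank s := by
    intro s hs
    by_contra hlt
    push_neg at hlt
    have h1 : 1 ≤ rank s := Finset.card_pos.mpr ⟨s a, Finset.mem_image_of_mem s (mem_univ a)⟩
    have : rank s = 1 := by omega
    obtain ⟨v, hv⟩ := Finset.card_eq_one.mp this
    exact hsync ⟨s, hs, v, fun x => Finset.mem_singleton.mp
      (hv ▸ Finset.mem_image_of_mem s (mem_univ x))⟩
  -- minimal rank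
  have hRne : (Set.range fun s : S => rank (s : Function.End Ω)).Nonempty :=
    ⟨rank f, ⟨⟨f, hfS⟩, rfl⟩⟩
  set q := sInf (Set.range fun s : S => rank (s : Function.End Ω)) with hq
  obtain ⟨⟨h, hhS⟩, hhq⟩ := Nat.sInf_mem hRne
  have hhq2 : rank h = q := hhq
  have hq2 : 2 ≤ q := hhq2 ▸ hrank2 h hhS
  have hmin : ∀ s ∈ S, q ≤ rank s := fun s hs => Nat.sInf_le ⟨⟨s, hs⟩, rfl⟩
  set n := Fintype.card Ω with hn
  -- ranks of products
  have rank_le_left : ∀ u v : Function.End Ω, rank (u * v) ≤ rank u := by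
    intro u v
    apply Finset.card_le_card
    intro y hy
    obtain ⟨x, _, hx⟩ := Finset.mem_image.mp hy
    exact Finset.mem_image.mpr ⟨v x, mem_univ _, hx⟩
  have hXh : (univ.image h).card = q := hhq2
  -- every G-translate of the image of h is a transversal of the kernel of any minimal u
  have transversal : ∀ u : Function.End Ω, u ∈ S → rank u = q → ∀ g : G, ∀ z : Ω,
      ((univ.image h).filter fun x => u ((g : Equiv.Perm Ω) x) = u z).card = 1 := by
    intro u huS huq g z
    set Y := (univ.image h).image ⇑(g : Equiv.Perm Ω) with hY
    have hYcard : Y.card = q := by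
      rw [hY, Finset.card_image_of_injective _ (Equiv.injective _), hXh]
    have hw : (u * (toEnd ⇑(g : Equiv.Perm Ω) * h)) ∈ S :=
      S.mul_mem huS (S.mul_mem (hgS g) hhS)
    have hwrank : rank (u * (toEnd ⇑(g : Equiv.Perm Ω) * h)) = (Y.image u).card := by
      show (univ.image (fun x => u ((g : Equiv.Perm Ω) (h x)))).card = (Y.image u).card
      rw [hY]
      congr 1
      ext y
      constructor
      · intro hy
        obtain ⟨x, _, rfl⟩ := Finset.mem_image.mp hy
        exact Finset.mem_image.mpr ⟨_, Finset.mem_image.mpr ⟨_, Finset.mem_image.mpr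
          ⟨x, mem_univ _, rfl⟩, rfl⟩, rfl⟩
      · intro hy
        obtain ⟨_, h1, rfl⟩ := Finset.mem_image.mp hy
        obtain ⟨_, h2, rfl⟩ := Finset.mem_image.mp h1
        obtain ⟨x, _, rfl⟩ := Finset.mem_image.mp h2
        exact Finset.mem_image.mpr ⟨x, mem_univ _, rfl⟩
    have hq' : q ≤ (Y.image u).card := hwrank ▸ hmin _ hw
    have hYu : (Y.image u).card = q :=
      le_antisymm (le_trans Finset.card_image_le (le_of_eq hYcard)) hq'
    have hinj : Set.InjOn u ↑Y := Finset.injOn_of_card_image_eq (by rw [hYu, hYcard])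
    have himq : Y.image u = univ.image u := by
      apply Finset.eq_of_subset_of_card_le
      · intro y hy
        obtain ⟨x, _, hx⟩ := Finset.mem_image.mp hy
        exact Finset.mem_image.mpr ⟨x, mem_univ _, hx⟩
      · rw [hYu]; exact le_of_eq huq
    have hz : u z ∈ Y.image u := himq ▸ Finset.mem_image_of_mem u (mem_univ z)
    obtain ⟨y, hyY, hyz⟩ := Finset.mem_image.mp hz
    obtain ⟨x, hxX, hxy⟩ := Finset.mem_image.mp hyY
    apply Finset.card_eq_one.mpr ⟨x, ?_⟩
    apply Finset.eq_singleton_iff_unique_mem.mpr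
    constructor
    · exact Finset.mem_filter.mpr ⟨hxX, by rw [hxy]; exact hyz⟩
    · intro x' hx'
      obtain ⟨hx'X, hx'e⟩ := Finset.mem_filter.mp hx'
      have : (g : Equiv.Perm Ω) x' = (g : Equiv.Perm Ω) x := by
        apply hinj
        · exact Finset.mem_coe.mpr (Finset.mem_image_of_mem _ hx'X)
        · exact Finset.mem_coe.mpr (hxy ▸ hyY)
        · rw [hx'e, hxy, hyz]
      exact Equiv.injective _ this
  -- every kernel class of a minimal u has size n / q
  have fiber_size : ∀ u : Function.End Ω, u ∈ S → rank u = q → ∀ z : Ω,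
      q * (univ.filter fun x => u x = u z).card = n := by
    intro u huS huq z
    have := count_aux G hG.1 (univ.image h) (univ.filter fun x => u x = u z) ?_
    · rw [hXh] at this; exact this
    · intro g
      rw [← transversal u huS huq g z]
      congr 1
      apply Finset.filter_congr
      intro x _
      simp only [Finset.mem_filter, mem_univ, true_and]
  -- minimal-rank elements h∘g and h∘g∘f
  have hmin1 : ∀ g : G, (h * toEnd ⇑(g : Equiv.Perm Ω)) ∈ S ∧
      rank (h * toEnd ⇑(g : Equiv.Perm Ω)) = q := by
    intro g
    refine ⟨S.mul_mem hhS (hgS g), ?_⟩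
    have huniv : (univ.image (⇑(g : Equiv.Perm Ω))) = univ :=
      Finset.eq_univ_of_card _ (by rw [Finset.card_image_of_injective _ (Equiv.injective _)]; rfl)
    show (univ.image (h ∘ ⇑(g : Equiv.Perm Ω))).card = q
    rw [show univ.image (h ∘ ⇑(g : Equiv.Perm Ω)) = (univ.image (⇑(g : Equiv.Perm Ω))).image h
      from Finset.image_image.symm, huniv]
    exact hXh
  have hmin2 : ∀ g : G, (h * toEnd ⇑(g : Equiv.Perm Ω) * toEnd f) ∈ S ∧
      rank (h * toEnd ⇑(g : Equiv.Perm Ω) * toEnd f) = q := by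
    intro g
    have hmem : (h * toEnd ⇑(g : Equiv.Perm Ω) * toEnd f) ∈ S :=
      S.mul_mem (hmin1 g).1 hfS
    refine ⟨hmem, le_antisymm ?_ (hmin _ hmem)⟩
    calc rank (h * toEnd ⇑(g : Equiv.Perm Ω) * toEnd f)
        ≤ rank (h * toEnd ⇑(g : Equiv.Perm Ω)) := rank_le_left _ _
      _ = q := (hmin1 g).2
  set c := f a with hc
  set M : Finset Ω := univ \ univ.image f with hM
  have hcim : c ∈ univ.image f := Finset.mem_image_of_mem f (mem_univ a)
  -- image of f has card (n - k) + 1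
  have hAuniv : (univ \ A).card + A.card = n := Finset.card_sdiff_add_card_eq_card (subset_univ A)
  have hinjA : ∀ y y' : Ω, y ∉ A → y' ∉ A → f y = f y' → y = y' := by
    intro y y' hy hy' he
    rcases hAker y y' he with h1 | h2
    · exact h1
    · exact absurd h2.1 hy
  have himf : univ.image f = insert c ((univ \ A).image f) := by
    ext v
    constructor
    · intro hv
      obtain ⟨y, _, rfl⟩ := Finset.mem_image.mp hv
      by_cases hyA : y ∈ A
      · exact Finset.mem_insert.mpr (Or.inl (hAcoll y hyA a haA))
      · exact Finset.mem_insert.mpr (Or.inr (Finset.mem_image.mpr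
          ⟨y, Finset.mem_sdiff.mpr ⟨mem_univ y, hyA⟩, rfl⟩))
    · intro hv
      rcases Finset.mem_insert.mp hv with rfl | hv
      · exact hcim
      · obtain ⟨y, _, rfl⟩ := Finset.mem_image.mp hv
        exact Finset.mem_image_of_mem f (mem_univ y)
  have hcnotin : c ∉ (univ \ A).image f := by
    intro hcmem
    obtain ⟨y, hy, hye⟩ := Finset.mem_image.mp hcmem
    have hyA : y ∉ A := (Finset.mem_sdiff.mp hy).2
    rcases hAker y a hye with rfl | h2
    · exact hyA haA
    · exact hyA h2.1
  have himfcard : (univ.image f).card = (univ \ A).card + 1 := by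
    rw [himf, Finset.card_insert_of_notMem hcnotin,
      Finset.card_image_of_injOn (fun y hy y' hy' => hinjA y y'
        (Finset.mem_sdiff.mp hy).2 (Finset.mem_sdiff.mp hy').2)]
  have hMcard : M.card + (univ.image f).card = n :=
    Finset.card_sdiff_add_card_eq_card (subset_univ _)
  -- the key fact: for every g, M is inside the kernel class of h∘g containing c
  have key : ∀ g : G, ∀ y ∈ M, h ((g : Equiv.Perm Ω) y) = h ((g : Equiv.Perm Ω) c) := by
    intro g y hyM
    set u₁ : Function.End Ω := h * toEnd ⇑(g : Equiv.Perm Ω) with hu₁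
    set u₂ : Function.End Ω := h * toEnd ⇑(g : Equiv.Perm Ω) * toEnd f with hu₂
    set F : Finset Ω := univ.filter fun x => u₁ x = u₁ c with hF
    set T : Finset Ω := univ.filter fun x => u₂ x = u₂ a with hT
    have hqF : q * F.card = n := by convert fiber_size u₁ (hmin1 g).1 (hmin1 g).2 c
    have hqT : q * T.card = n := by convert fiber_size u₂ (hmin2 g).1 (hmin2 g).2 a
    have hFT : F.card = T.card := Nat.eq_of_mul_eq_mul_left (by omega) (hqF.trans hqT.symm)
    have hAT : A ⊆ T := by
      intro y hyA
      apply Finset.mem_filter.mpr ⟨mem_univ _, ?_⟩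
      show h ((g : Equiv.Perm Ω) (f y)) = h ((g : Equiv.Perm Ω) (f a))
      rw [hAcoll y hyA a haA]
    have himg : (T \ A).image f = (F ∩ univ.image f).erase c := by
      ext v
      constructor
      · intro hv
        obtain ⟨y, hy, rfl⟩ := Finset.mem_image.mp hv
        obtain ⟨hyT, hyA⟩ := Finset.mem_sdiff.mp hy
        apply Finset.mem_erase.mpr
        constructor
        · intro hfc
          rcases hAker y a hfc with rfl | h2
          · exact hyA haA
          · exact hyA h2.1
        · apply Finset.mem_inter.mpr
          refine ⟨Finset.mem_filter.mpr ⟨mem_univ _, ?_⟩, Finset.mem_image_of_mem f (mem_univ y)⟩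
          show h ((g : Equiv.Perm Ω) (f y)) = h ((g : Equiv.Perm Ω) c)
          exact (Finset.mem_filter.mp hyT).2
      · intro hv
        obtain ⟨hvc, hvm⟩ := Finset.mem_erase.mp hv
        obtain ⟨hvF, hvim⟩ := Finset.mem_inter.mp hvm
        obtain ⟨y, _, rfl⟩ := Finset.mem_image.mp hvim
        have hyA : y ∉ A := fun hyA => hvc (hAcoll y hyA a haA)
        apply Finset.mem_image_of_mem
        apply Finset.mem_sdiff.mpr ⟨Finset.mem_filter.mpr ⟨mem_univ _, ?_⟩, hyA⟩
        show h ((g : Equiv.Perm Ω) (f y)) = h ((g : Equiv.Perm Ω) (f a))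
        exact (Finset.mem_filter.mp hvF).2
    have hcard1 : (T \ A).card = ((F ∩ univ.image f).erase c).card := by
      rw [← himg]
      exact (Finset.card_image_of_injOn (fun y hy y' hy' => hinjA y y'
        (Finset.mem_sdiff.mp hy).2 (Finset.mem_sdiff.mp hy').2 )).symm
    have hcF : c ∈ F ∩ univ.image f := Finset.mem_inter.mpr ⟨Finset.mem_filter.mpr
      ⟨mem_univ _, rfl⟩, hcim⟩
    have hcard2 : ((F ∩ univ.image f).erase c).card + 1 = (F ∩ univ.image f).card :=
      Finset.card_erase_add_one hcF
    have hcard3 : (T \ A).card + A.card = T.card := Finset.card_sdiff_add_card_eq_card hAT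
    have hcard4 : (F ∩ univ.image f).card + (F \ univ.image f).card = F.card :=
      Finset.card_inter_add_card_sdiff F (univ.image f)
    -- conclude F \ im f = M
    have hsub : F \ univ.image f ⊆ M := fun x hx => Finset.mem_sdiff.mpr
      ⟨mem_univ _, (Finset.mem_sdiff.mp hx).2⟩
    have hcardeq : M.card ≤ (F \ univ.image f).card := by omega
    have heq : F \ univ.image f = M := Finset.eq_of_subset_of_card_le hsub hcardeq
    have hyF : y ∈ F := (Finset.mem_sdiff.mp (heq ▸ hyM)).1
    exact (Finset.mem_filter.mp hyF).2
  -- M is nonempty and c ∉ M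
  have hMpos : 0 < M.card := by omega
  obtain ⟨m₀, hm₀⟩ := Finset.card_pos.mp hMpos
  have hm₀c : m₀ ≠ c := fun he => (Finset.mem_sdiff.mp hm₀).2 (he ▸ hcim)
  -- the G-congruence generated by D = {c} ∪ M
  set r : Ω → Ω → Prop := fun x y => ∃ g : G, ∃ u, (u = c ∨ u ∈ M) ∧ ∃ v, (v = c ∨ v ∈ M) ∧
    x = (g : Equiv.Perm Ω) u ∧ y = (g : Equiv.Perm Ω) v with hr
  have hr_h : ∀ x y, r x y → h x = h y := by
    rintro x y ⟨g, u, hu, v, hv, rfl, rfl⟩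
    have e1 : h ((g : Equiv.Perm Ω) u) = h ((g : Equiv.Perm Ω) c) := by
      rcases hu with rfl | hu
      · rfl
      · exact key g u hu
    have e2 : h ((g : Equiv.Perm Ω) v) = h ((g : Equiv.Perm Ω) c) := by
      rcases hv with rfl | hv
      · rfl
      · exact key g v hv
    rw [e1, e2]
  have hrr_h : ∀ x y, Relation.EqvGen r x y → h x = h y := by
    intro x y hxy
    induction hxy with
    | rel x y hxy => exact hr_h x y hxy
    | refl x => rfl
    | symm x y _ ih => exact ih.symm
    | trans x y z _ _ ih1 ih2 => exact ih1.trans ih2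
  have hrr_inv : ∀ (g : G) (x y : Ω), Relation.EqvGen r x y →
      Relation.EqvGen r ((g : Equiv.Perm Ω) x) ((g : Equiv.Perm Ω) y) := by
    intro g x y hxy
    induction hxy with
    | rel x y hxy =>
      obtain ⟨g₀, u, hu, v, hv, rfl, rfl⟩ := hxy
      apply Relation.EqvGen.rel
      exact ⟨g * g₀, u, hu, v, hv, by rw [Subgroup.coe_mul, Equiv.Perm.mul_apply],
        by rw [Subgroup.coe_mul, Equiv.Perm.mul_apply]⟩
    | refl x => exact Relation.EqvGen.refl _
    | symm x y _ ih => exact Relation.EqvGen.symm _ _ ih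
    | trans x y z _ _ ih1 ih2 => exact Relation.EqvGen.trans _ _ _ ih1 ih2
  set B : Set Ω := {y | Relation.EqvGen r c y} with hB
  have hcB : c ∈ B := Relation.EqvGen.refl c
  have hm₀B : m₀ ∈ B := by
    apply Relation.EqvGen.rel
    exact ⟨1, c, Or.inl rfl, m₀, Or.inr hm₀, by simp, by simp⟩
  -- B is a block
  have hblock : MulAction.IsBlock G B := by
    rw [MulAction.isBlock_iff_smul_eq_or_disjoint]
    intro g
    rw [or_iff_not_imp_right]
    intro hnd
    obtain ⟨x, hx1, hx2⟩ := Set.not_disjoint_iff.mp hnd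
    obtain ⟨b, hbB, hbx⟩ := Set.mem_smul_set.mp hx1
    have hgb : (g : Equiv.Perm Ω) b = x := hbx
    have hgc : Relation.EqvGen r c ((g : Equiv.Perm Ω) c) := by
      apply Relation.EqvGen.trans _ x _ hx2
      apply Relation.EqvGen.symm
      exact hgb ▸ hrr_inv g c b hbB
    ext y
    constructor
    · intro hy
      obtain ⟨b', hb'B, hb'y⟩ := Set.mem_smul_set.mp hy
      have : Relation.EqvGen r ((g : Equiv.Perm Ω) c) ((g : Equiv.Perm Ω) b') :=
        hrr_inv g c b' hb'B
      exact Relation.EqvGen.trans _ _ _ hgc (hb'y ▸ this)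
    · intro hy
      have h1 : Relation.EqvGen r ((g⁻¹ : G) • c) ((g⁻¹ : G) • y) := hrr_inv g⁻¹ c y hy
      have h2 : Relation.EqvGen r ((g⁻¹ : G) • c) ((g⁻¹ : G) • ((g : Equiv.Perm Ω) c)) :=
        hrr_inv g⁻¹ c _ hgc
      have h3 : (g⁻¹ : G) • ((g : Equiv.Perm Ω) c) = c := by
        show ((g⁻¹ : G) : Equiv.Perm Ω) ((g : Equiv.Perm Ω) c) = c
        simp
      rw [h3] at h2
      have h4 : Relation.EqvGen r c ((g⁻¹ : G) • y) :=
        Relation.EqvGen.trans _ _ _ (Relation.EqvGen.symm _ _ h2) h1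
      refine Set.mem_smul_set.mpr ⟨(g⁻¹ : G) • y, h4, ?_⟩
      show (g : Equiv.Perm Ω) (((g⁻¹ : G) : Equiv.Perm Ω) y) = y
      simp
  rcases hG.2 B hblock with hss | huniv
  · exact hm₀c (hss hm₀B hcB)
  · -- B = univ is impossible since h is not constant on B
    have h2q : 1 < (univ.image h).card := by rw [hXh]; omega
    obtain ⟨v1, hv1, v2, hv2, hne⟩ := Finset.one_lt_card.mp h2q
    have : ∃ v ∈ univ.image h, v ≠ h c := by
      by_cases hv1c : v1 = h c
      · exact ⟨v2, hv2, fun hv2c => hne (hv1c ▸ hv2c ▸ rfl)⟩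
      · exact ⟨v1, hv1, hv1c⟩
    obtain ⟨v, hv, hvc⟩ := this
    obtain ⟨y, _, rfl⟩ := Finset.mem_image.mp hv
    have hyB : y ∈ B := huniv ▸ Set.mem_univ y
    exact hvc (hrr_h c y hyB).symm
end

section
/- Let S be a transformation semigroup on a finite set Ω containing a primitive permutation group G, and suppose the minimum rank of an element of S is r with r > 1. Then S contains no element of rank r+1. -/
open Finset

variable {Ω : Type*} [Fintype Ω] [DecidableEq Ω]

lemma count_const' (G : Subgroup (Equiv.Perm Ω)) [DecidablePred (· ∈ G)]
    (htrans : MulAction.IsPretransitive G Ω) (b c b' c' : Ω) :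
    ((univ.filter (· ∈ G)).filter fun g : Equiv.Perm Ω => g b = c).card
      = ((univ.filter (· ∈ G)).filter fun g : Equiv.Perm Ω => g b' = c').card := by
  classical
  obtain ⟨h, hh⟩ := htrans.exists_smul_eq b' b
  obtain ⟨h', hh'⟩ := htrans.exists_smul_eq c c'
  have hhb : (h : Equiv.Perm Ω) b' = b := hh
  have hhc : (h' : Equiv.Perm Ω) c = c' := hh'
  apply Finset.card_bij' (fun g _ => (h' : Equiv.Perm Ω) * g * (h : Equiv.Perm Ω))
    (fun g _ => ((h' : Equiv.Perm Ω))⁻¹ * g * ((h : Equiv.Perm Ω))⁻¹)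
  · intro g hg
    simp only [mem_filter, mem_univ, true_and] at hg ⊢
    refine ⟨mul_mem (mul_mem h'.2 hg.1) h.2, ?_⟩
    simp only [Equiv.Perm.mul_apply, hhb, hg.2, hhc]
  · intro g hg
    simp only [mem_filter, mem_univ, true_and] at hg ⊢
    refine ⟨mul_mem (mul_mem (inv_mem h'.2) hg.1) (inv_mem h.2), ?_⟩
    have : (h : Equiv.Perm Ω)⁻¹ b = b' := by rw [← hhb]; simp
    have h2 : (h' : Equiv.Perm Ω)⁻¹ c' = c := by rw [← hhc]; simp
    simp only [Equiv.Perm.mul_apply, this, hg.2, h2]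
  · intro g hg; group
  · intro g hg; group

lemma uniform_aux (S : Set (Ω → Ω)) (hS : ∀ f ∈ S, ∀ g ∈ S, (g ∘ f) ∈ S)
    (G : Subgroup (Equiv.Perm Ω)) [DecidablePred (· ∈ G)]
    (hGS : ∀ g : Equiv.Perm Ω, g ∈ G → ⇑g ∈ S)
    (htrans : MulAction.IsPretransitive G Ω) (r : ℕ)
    (f : Ω → Ω) (hfS : f ∈ S) (hrf : rank f = r)
    (hmin : ∀ f ∈ S, r ≤ rank f) (b₀ : Ω)
    (s : Ω → Ω) (hsS : s ∈ S) (hrs : rank s = r) (c : Ω) (hc : c ∈ univ.image s) :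
    (univ.filter (· ∈ G) : Finset (Equiv.Perm Ω)).card
      = r * ((univ.filter fun z => s z = c).card
          * ((univ.filter (· ∈ G)).filter fun g : Equiv.Perm Ω => g b₀ = b₀).card) := by
  classical
  set Gfin : Finset (Equiv.Perm Ω) := univ.filter (· ∈ G) with hGfin
  set B : Finset Ω := univ.image f with hB
  set F : Finset Ω := univ.filter fun z => s z = c with hF
  set k : ℕ := (Gfin.filter fun g : Equiv.Perm Ω => g b₀ = b₀).card with hk
  have hBcard : B.card = r := hrf
  -- every translate of B is an exact transversal of the fibers of s
  have key : ∀ g ∈ Gfin, (B.filter fun b => s (g b) = c).card = 1 := by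
    intro g hg
    have hgG : g ∈ G := by simpa [hGfin] using hg
    have hmem : (s ∘ ⇑g ∘ f) ∈ S := hS _ (hS f hfS ⇑g (hGS g hgG)) s hsS
    have himg : univ.image (s ∘ ⇑g ∘ f) = B.image (s ∘ ⇑g) := by
      rw [hB, Finset.image_image]; rfl
    have hle : (B.image (s ∘ ⇑g)).card ≤ r := hBcard ▸ card_image_le
    have hge : r ≤ (B.image (s ∘ ⇑g)).card := by
      have := hmin _ hmem
      rwa [rank, himg] at this
    have hcard : (B.image (s ∘ ⇑g)).card = r := le_antisymm hle hge
    have hinj : Set.InjOn (s ∘ ⇑g) B := by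
      rw [← Finset.card_image_iff]; rw [hcard, hBcard]
    have hsub : B.image (s ∘ ⇑g) = univ.image s := by
      apply Finset.eq_of_subset_of_card_le
      · intro x hx
        obtain ⟨b, _, rfl⟩ := Finset.mem_image.mp hx
        exact Finset.mem_image.mpr ⟨g b, mem_univ _, rfl⟩
      · rw [hcard]; exact le_of_eq hrs
    obtain ⟨b, hbB, hbc⟩ : ∃ b ∈ B, (s ∘ ⇑g) b = c := by
      rw [← hsub] at hc
      exact Finset.mem_image.mp hc
    rw [Finset.card_eq_one]
    refine ⟨b, ?_⟩
    ext b'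
    simp only [mem_filter, mem_singleton]
    constructor
    · rintro ⟨hb'B, hb'c⟩
      exact hinj (by exact_mod_cast hb'B) (by exact_mod_cast hbB) (by simpa using hb'c.trans hbc.symm)
    · rintro rfl; exact ⟨hbB, hbc⟩
  calc Gfin.card = ∑ g ∈ Gfin, (B.filter fun b => s (g b) = c).card := by
        rw [Finset.card_eq_sum_ones]
        exact Finset.sum_congr rfl fun g hg => (key g hg).symm
    _ = ∑ g ∈ Gfin, ∑ b ∈ B, if s (g b) = c then 1 else 0 := by
        refine Finset.sum_congr rfl fun g _ => ?_
        exact Finset.card_filter _ _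
    _ = ∑ b ∈ B, ∑ g ∈ Gfin, if s (g b) = c then 1 else 0 := Finset.sum_comm
    _ = ∑ b ∈ B, (Gfin.filter fun g => s (g b) = c).card := by
        refine Finset.sum_congr rfl fun b _ => ?_
        exact (Finset.card_filter _ _).symm
    _ = ∑ b ∈ B, ∑ x ∈ F, ((Gfin.filter fun g => s (g b) = c).filter fun g => g b = x).card := by
        refine Finset.sum_congr rfl fun b _ => ?_
        apply Finset.card_eq_sum_card_fiberwise
        intro g hg
        simp only [hF, mem_filter, mem_univ, true_and]
        simpa using (Finset.mem_filter.mp hg).2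
    _ = ∑ b ∈ B, ∑ x ∈ F, (Gfin.filter fun g => g b = x).card := by
        refine Finset.sum_congr rfl fun b _ => Finset.sum_congr rfl fun x hx => ?_
        have hsx : s x = c := by simpa [hF] using hx
        congr 1
        rw [Finset.filter_filter]
        apply Finset.filter_congr
        intro g _
        constructor
        · rintro ⟨_, h2⟩; exact h2
        · intro h2; exact ⟨by rw [h2, hsx], h2⟩
    _ = ∑ b ∈ B, ∑ x ∈ F, k := by
        refine Finset.sum_congr rfl fun b _ => Finset.sum_congr rfl fun x _ => ?_
        rw [hk]; exact count_const' G htrans b x b₀ b₀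
    _ = r * (F.card * k) := by
        rw [Finset.sum_const, Finset.sum_const, hBcard, smul_eq_mul, smul_eq_mul]

theorem stmt16 (S : Set (Ω → Ω)) (hS : ∀ f ∈ S, ∀ g ∈ S, (g ∘ f) ∈ S)
    (G : Subgroup (Equiv.Perm Ω)) (hGS : ∀ g : Equiv.Perm Ω, g ∈ G → ⇑g ∈ S)
    (hG : IsPrimitive G) (r : ℕ) (hr1 : 1 < r)
    (hr : ∃ f ∈ S, rank f = r) (hmin : ∀ f ∈ S, r ≤ rank f) :
    ¬ ∃ h ∈ S, rank h = r + 1 := by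
  classical
  obtain ⟨f, hfS, hrf⟩ := hr
  obtain ⟨htrans, hblocks⟩ := hG
  rintro ⟨t, htS, hrt⟩
  -- Ω is nonempty
  have hΩ : Nonempty Ω := by
    by_contra hempty
    rw [not_nonempty_iff] at hempty
    have : rank f = 0 := by simp [rank, Finset.univ_eq_empty]
    omega
  obtain ⟨b₀⟩ := hΩ
  have hkpos : 0 < ((univ.filter (· ∈ G)).filter fun g : Equiv.Perm Ω => g b₀ = b₀).card := by
    apply Finset.card_pos.mpr
    exact ⟨1, by simp [Subgroup.one_mem]⟩
  -- the common kernel-class size of minimal-rank elements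
  set m : ℕ := (univ.filter fun z => f z = f b₀).card with hm
  have hc₀ : f b₀ ∈ univ.image f := Finset.mem_image_of_mem f (mem_univ b₀)
  have eqcard : ∀ s ∈ S, rank s = r → ∀ c ∈ univ.image s,
      (univ.filter fun z => s z = c).card = m := by
    intro s hs hrs c hc
    have h1 := uniform_aux S hS G hGS htrans r f hfS hrf hmin b₀ s hs hrs c hc
    have h2 := uniform_aux S hS G hGS htrans r f hfS hrf hmin b₀ f hfS hrf (f b₀) hc₀
    rw [h1] at h2
    have hr0 : 0 < r := by omega
    have := Nat.eq_of_mul_eq_mul_left hr0 h2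
    exact Nat.eq_of_mul_eq_mul_right hkpos this
  set A : Finset Ω := univ.image t with hA
  have hAcard : A.card = r + 1 := hrt
  have hfibpos : ∀ a ∈ A, 0 < (univ.filter fun z => t z = a).card := by
    intro a ha
    obtain ⟨z, _, hz⟩ := Finset.mem_image.mp ha
    exact Finset.card_pos.mpr ⟨z, by simp [hz]⟩
  -- for every g ∈ G there is a unique collapsed pair in A, with fiber-size constraints
  have pair : ∀ g : Equiv.Perm Ω, g ∈ G → ∃ x y : Ω, x ∈ A ∧ y ∈ A ∧ x ≠ y ∧
      f (g x) = f (g y) ∧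
      (∀ a ∈ A, a ≠ x → a ≠ y → (univ.filter fun z => t z = a).card = m) ∧
      ((univ.filter fun z => t z = x).card + (univ.filter fun z => t z = y).card = m) := by
    intro g hg
    have hmem : (f ∘ ⇑g ∘ t) ∈ S := hS _ (hS t htS ⇑g (hGS g hg)) f hfS
    have himg : univ.image (f ∘ ⇑g ∘ t) = A.image (f ∘ ⇑g) := by
      rw [hA, Finset.image_image]; rfl
    have hle : (A.image (f ∘ ⇑g)).card ≤ r := by
      have hsub : A.image (f ∘ ⇑g) ⊆ univ.image f := by
        intro x hx
        obtain ⟨a, _, rfl⟩ := Finset.mem_image.mp hx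
        exact Finset.mem_image_of_mem f (mem_univ _)
      calc (A.image (f ∘ ⇑g)).card ≤ (univ.image f).card := Finset.card_le_card hsub
        _ = r := hrf
    have hge : r ≤ (A.image (f ∘ ⇑g)).card := by
      have := hmin _ hmem
      rwa [rank, himg] at this
    have hcard : (A.image (f ∘ ⇑g)).card = r := le_antisymm hle hge
    have hranksg : rank (f ∘ ⇑g ∘ t) = r := by rw [rank, himg]; exact hcard
    -- a collapsed pair exists
    obtain ⟨x, hx, y, hy, hxy, hfxy⟩ :
        ∃ x ∈ A, ∃ y ∈ A, x ≠ y ∧ (f ∘ ⇑g) x = (f ∘ ⇑g) y := by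
      apply Finset.exists_ne_map_eq_of_card_lt_of_maps_to
      · rw [hcard, hAcard]; omega
      · intro a ha; exact Finset.mem_image_of_mem _ ha
    -- uniqueness of the collapsed pair
    have huniq : ∀ a ∈ A, ∀ a' ∈ A, a ≠ a' → f (g a) = f (g a') →
        (a = x ∧ a' = y) ∨ (a = y ∧ a' = x) := by
      have herase : (A.erase y).image (f ∘ ⇑g) = A.image (f ∘ ⇑g) := by
        apply Finset.Subset.antisymm
        · exact Finset.image_subset_image (Finset.erase_subset _ _)
        · intro w hw
          obtain ⟨a, ha, rfl⟩ := Finset.mem_image.mp hw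
          by_cases hay : a = y
          · subst hay
            exact Finset.mem_image.mpr ⟨x, Finset.mem_erase.mpr ⟨hxy, hx⟩, hfxy⟩
          · exact Finset.mem_image.mpr ⟨a, Finset.mem_erase.mpr ⟨hay, ha⟩, rfl⟩
      have hinj : Set.InjOn (f ∘ ⇑g) (A.erase y) := by
        rw [← Finset.card_image_iff, herase, hcard, Finset.card_erase_of_mem hy, hAcard]
        omega
      have hfxy' : f (g x) = f (g y) := hfxy
      intro a ha a' ha' hne heq
      by_cases hay : a = y
      · have ha'y : a' ≠ y := fun h => hne (by rw [hay, h])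
        have h1 : (f ∘ ⇑g) a' = (f ∘ ⇑g) x := by
          show f (g a') = f (g x)
          rw [hfxy', ← hay]
          exact heq.symm
        have := hinj (by exact_mod_cast Finset.mem_erase.mpr ⟨ha'y, ha'⟩)
          (by exact_mod_cast Finset.mem_erase.mpr ⟨hxy, hx⟩) h1
        exact Or.inr ⟨hay, this⟩
      · by_cases ha'y : a' = y
        · have h1 : (f ∘ ⇑g) a = (f ∘ ⇑g) x := by
            show f (g a) = f (g x)
            rw [hfxy', ← ha'y]
            exact heq
          have := hinj (by exact_mod_cast Finset.mem_erase.mpr ⟨hay, ha⟩)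
            (by exact_mod_cast Finset.mem_erase.mpr ⟨hxy, hx⟩) h1
          exact Or.inl ⟨this, ha'y⟩
        · exact absurd (hinj (by exact_mod_cast Finset.mem_erase.mpr ⟨hay, ha⟩)
            (by exact_mod_cast Finset.mem_erase.mpr ⟨ha'y, ha'⟩) heq) hne
    refine ⟨x, y, hx, hy, hxy, hfxy, ?_, ?_⟩
    · -- singleton fibers have size m
      intro a ha hax hay
      have hfa : f (g a) ∈ univ.image (f ∘ ⇑g ∘ t) := by
        obtain ⟨z, _, hz⟩ := Finset.mem_image.mp ha
        exact Finset.mem_image.mpr ⟨z, mem_univ _, by simp [Function.comp, hz]⟩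
      have hfeq : (univ.filter fun z => (f ∘ ⇑g ∘ t) z = f (g a))
          = (univ.filter fun z => t z = a) := by
        ext z
        simp only [mem_filter, mem_univ, true_and, Function.comp_apply]
        constructor
        · intro hz
          by_contra hne
          have htzA : t z ∈ A := Finset.mem_image_of_mem t (mem_univ z)
          rcases huniq (t z) htzA a ha hne hz with ⟨h1, h2⟩ | ⟨h1, h2⟩
          · exact hay h2
          · exact hax h2
        · intro hz; rw [hz]
      have := eqcard _ hmem hranksg _ hfa
      rwa [hfeq] at this
    · -- the two collapsed fibers sum to m
      have hfx : f (g x) ∈ univ.image (f ∘ ⇑g ∘ t) := by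
        obtain ⟨z, _, hz⟩ := Finset.mem_image.mp hx
        exact Finset.mem_image.mpr ⟨z, mem_univ _, by simp [Function.comp, hz]⟩
      have hfeq : (univ.filter fun z => (f ∘ ⇑g ∘ t) z = f (g x))
          = (univ.filter fun z => t z = x) ∪ (univ.filter fun z => t z = y) := by
        ext z
        simp only [mem_filter, mem_univ, true_and, Function.comp_apply, Finset.mem_union]
        constructor
        · intro hz
          have htzA : t z ∈ A := Finset.mem_image_of_mem t (mem_univ z)
          by_cases htx : t z = x
          · exact Or.inl htx
          · rcases huniq (t z) htzA x hx htx hz with ⟨h1, _⟩ | ⟨h1, _⟩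
            · exact absurd h1 htx
            · exact Or.inr h1
        · rintro (h | h)
          · rw [h]
          · rw [h]; exact hfxy.symm
      have hdisj : Disjoint (univ.filter fun z => t z = x) (univ.filter fun z => t z = y) := by
        rw [Finset.disjoint_left]
        intro z hz1 hz2
        simp only [mem_filter, mem_univ, true_and] at hz1 hz2
        exact hxy (hz1 ▸ hz2 ▸ rfl)
      have := eqcard _ hmem hranksg _ hfx
      rw [hfeq, Finset.card_union_of_disjoint hdisj] at this
      exact this
  -- the collapsed pair is the same for all g
  obtain ⟨x, y, hxA, hyA, hxy, _, hfib1, hfib2⟩ := pair 1 (Subgroup.one_mem G)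
  have hxpos := hfibpos x hxA
  have hypos := hfibpos y hyA
  have hmpos : 0 < m := by omega
  have pairconst : ∀ g : Equiv.Perm Ω, g ∈ G → f (g x) = f (g y) := by
    intro g hg
    obtain ⟨u, v, huA, hvA, huv, hfuv, hf1, hf2⟩ := pair g hg
    have hupos := hfibpos u huA
    have hvpos := hfibpos v hvA
    by_cases hux : u = x
    · subst hux
      by_cases hvy : v = y
      · subst hvy; exact hfuv
      · have hvx : v ≠ u := fun h => huv h.symm
        have hvm := hfib1 v hvA hvx hvy
        omega
    · by_cases huy : u = y
      · subst huy
        by_cases hvx : v = x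
        · subst hvx; exact hfuv.symm
        · have hvu : v ≠ u := fun h => huv h.symm
          have hvm := hfib1 v hvA hvx hvu
          omega
      · have hum := hfib1 u huA hux huy
        by_cases hvx : v = x
        · subst hvx; omega
        · by_cases hvy : v = y
          · subst hvy; omega
          · have hvm := hfib1 v hvA hvx hvy
            omega
  -- the block generated by the pair
  set Blk : Set Ω := {z | ∀ g : Equiv.Perm Ω, g ∈ G → f (g z) = f (g x)} with hBlk
  have hxB : x ∈ Blk := fun _ _ => rfl
  have hyB : y ∈ Blk := fun g hg => (pairconst g hg).symm
  have hblk : MulAction.IsBlock G Blk := by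
    rw [MulAction.isBlock_iff_smul_eq_or_disjoint]
    intro h
    by_cases hcase : ∀ g : Equiv.Perm Ω, g ∈ G → f (g ((h : Equiv.Perm Ω) x)) = f (g x)
    · left
      ext w
      constructor
      · rintro ⟨z, hz, rfl⟩
        intro g hg
        have h1 := hz (g * (h : Equiv.Perm Ω)) (mul_mem hg h.2)
        have h2 := hcase g hg
        simp only [Equiv.Perm.mul_apply] at h1
        exact h1.trans h2
      · intro hw
        refine ⟨(h : Equiv.Perm Ω)⁻¹ w, ?_, ?_⟩
        · intro g hg
          have hg' : g * (h : Equiv.Perm Ω)⁻¹ ∈ G := mul_mem hg (inv_mem h.2)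
          have h1 := hw (g * (h : Equiv.Perm Ω)⁻¹) hg'
          have h2 := hcase (g * (h : Equiv.Perm Ω)⁻¹) hg'
          simp only [Equiv.Perm.mul_apply, Equiv.Perm.inv_def, Equiv.symm_apply_apply] at h1 h2
          exact h1.trans h2.symm
        · show (h : Equiv.Perm Ω) ((h : Equiv.Perm Ω)⁻¹ w) = w
          simp
    · right
      rw [Set.disjoint_left]
      rintro w ⟨z, hz, rfl⟩ hw2
      apply hcase
      intro g hg
      have h1 := hw2 g hg
      have h2 := hz (g * (h : Equiv.Perm Ω)) (mul_mem hg h.2)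
      simp only [Equiv.Perm.mul_apply] at h2
      -- h1 : f (g (h • z)) = f (g x), h2 : f (g (h z)) = f (g (h x))
      have h1' : f (g ((h : Equiv.Perm Ω) z)) = f (g x) := h1
      exact (h2.symm.trans h1')
  rcases hblocks Blk hblk with hsub | huniv
  · exact hxy (hsub hxB hyB)
  · -- all of Ω collapses under f
    have hall : ∀ z : Ω, f z = f x := by
      intro z
      have hz : z ∈ Blk := huniv ▸ Set.mem_univ z
      have := hz 1 (Subgroup.one_mem G)
      simpa using this
    have : rank f ≤ 1 := by
      have : univ.image f ⊆ {f x} := by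
        intro w hw
        obtain ⟨z, _, rfl⟩ := Finset.mem_image.mp hw
        simp [hall z]
      calc (univ.image f).card ≤ ({f x} : Finset Ω).card := Finset.card_le_card this
        _ = 1 := Finset.card_singleton _
    omega
end

section
/- Let G be a primitive permutation group of degree n > 2. Then G synchronizes every non-uniform map of rank 3 and every non-uniform map of rank 4. -/
open Finset

variable {Ω : Type*} [Fintype Ω] [DecidableEq Ω]

instance decPredEnd (s : Function.End Ω) (k : Ω) : DecidablePred (fun (z : Ω) => s z = k) :=
  fun z => (inferInstance : DecidableEq Ω) (s z) k

section Aux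

variable {G : Subgroup (Equiv.Perm Ω)}

lemma isBlock_of_rel (R : Ω → Ω → Prop)
    (hsym : ∀ {x y}, R x y → R y x)
    (htr : ∀ {x y z}, R x y → R y z → R x z)
    (hinv : ∀ (g : G) {x y}, R x y → R (g • x) (g • y)) (a : Ω) :
    MulAction.IsBlock G {y | R a y} := by
  rw [MulAction.isBlock_iff_smul_eq_of_mem]
  intro g u hu hgu
  simp only [Set.mem_setOf_eq] at hu hgu
  ext y
  simp only [Set.mem_smul_set, Set.mem_setOf_eq]
  constructor
  · rintro ⟨b, hb, rfl⟩
    exact htr hgu (hinv g (htr (hsym hu) hb))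
  · intro hy
    refine ⟨g⁻¹ • y, ?_, smul_inv_smul g y⟩
    have h1 := hinv g⁻¹ (htr (hsym hgu) hy)
    rw [inv_smul_smul] at h1
    exact htr hu h1

lemma card_smul_fiber [Fintype G] (htrans : MulAction.IsPretransitive G Ω) (k v : Ω) :
    (univ.filter (fun g : G => g • k = v)).card * Fintype.card Ω = Fintype.card G := by
  have hconst : ∀ w : Ω, (univ.filter (fun g : G => g • k = w)).card
      = (univ.filter (fun g : G => g • k = v)).card := by
    intro w
    obtain ⟨h, hh⟩ := htrans.exists_smul_eq w v
    refine Finset.card_bij (fun g _ => h * g) ?_ ?_ ?_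
    · intro g hg
      simp only [mem_filter, mem_univ, true_and] at hg ⊢
      rw [mul_smul, hg, hh]
    · intro g1 h1 g2 h2 he
      exact mul_left_cancel he
    · intro g' hg'
      simp only [mem_filter, mem_univ, true_and] at hg'
      refine ⟨h⁻¹ * g', ?_, ?_⟩
      · simp only [mem_filter, mem_univ, true_and, mul_smul, hg']
        rw [← hh, inv_smul_smul]
      · show h * (h⁻¹ * g') = g'
        rw [mul_inv_cancel_left]
  have hsum : Fintype.card G = ∑ w : Ω, (univ.filter (fun g : G => g • k = w)).card := by
    rw [← Finset.card_univ]
    exact Finset.card_eq_sum_card_fiberwise (fun g _ => mem_univ _)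
  rw [hsum, Finset.sum_congr rfl (fun w _ => hconst w), Finset.sum_const, Finset.card_univ,
    smul_eq_mul, mul_comm]

lemma count_aux_s18 (htrans : MulAction.IsPretransitive G Ω) (K F : Finset Ω)
    (h1 : ∀ g : G, (F.filter (fun v => g⁻¹ • v ∈ K)).card = 1) :
    F.card * K.card = Fintype.card Ω := by
  haveI : Fintype G := Fintype.ofFinite _
  have hT : ∑ g : G, (F.filter (fun v => g⁻¹ • v ∈ K)).card = Fintype.card G := by
    simp [h1]
  have e1 : ∀ g : G, (F.filter (fun v => g⁻¹ • v ∈ K)).card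
      = ∑ v ∈ F, (K.filter (fun k => g • k = v)).card := by
    intro g
    rw [Finset.card_filter]
    refine Finset.sum_congr rfl ?_
    intro v hv
    by_cases hm : g⁻¹ • v ∈ K
    · rw [if_pos hm]
      have he : K.filter (fun k => g • k = v) = {g⁻¹ • v} := by
        ext k
        simp only [mem_filter, mem_singleton]
        constructor
        · rintro ⟨hk, rfl⟩; rw [inv_smul_smul]
        · rintro rfl; exact ⟨hm, smul_inv_smul g v⟩
      rw [he, Finset.card_singleton]
    · rw [if_neg hm]
      symm
      rw [Finset.card_eq_zero, Finset.filter_eq_empty_iff]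
      intro k hk hgk
      exact hm (by rw [← hgk, inv_smul_smul]; exact hk)
  have hswap : ∑ g : G, (F.filter (fun v => g⁻¹ • v ∈ K)).card
      = ∑ v ∈ F, ∑ k ∈ K, (univ.filter (fun g : G => g • k = v)).card := by
    calc ∑ g : G, (F.filter fun v => g⁻¹ • v ∈ K).card
        = ∑ g : G, ∑ v ∈ F, (K.filter (fun k => g • k = v)).card :=
          Finset.sum_congr rfl (fun g _ => e1 g)
      _ = ∑ v ∈ F, ∑ g : G, (K.filter (fun k => g • k = v)).card := Finset.sum_comm
      _ = ∑ v ∈ F, ∑ k ∈ K, (univ.filter (fun g : G => g • k = v)).card := by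
          refine Finset.sum_congr rfl fun v _ => ?_
          calc ∑ g : G, (K.filter (fun k => g • k = v)).card
              = ∑ g : G, ∑ k ∈ K, if g • k = v then 1 else 0 :=
                Finset.sum_congr rfl fun g _ => Finset.card_filter _ _
            _ = ∑ k ∈ K, ∑ g : G, if g • k = v then 1 else 0 := Finset.sum_comm
            _ = ∑ k ∈ K, (univ.filter (fun g : G => g • k = v)).card :=
                Finset.sum_congr rfl fun k _ => (Finset.card_filter _ _).symm
  have key : (∑ v ∈ F, ∑ k ∈ K, (univ.filter (fun g : G => g • k = v)).card) * Fintype.card Ω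
      = (F.card * K.card) * Fintype.card G := by
    have hv : ∀ v ∈ F, (∑ k ∈ K, (univ.filter (fun g : G => g • k = v)).card) * Fintype.card Ω
        = K.card * Fintype.card G := by
      intro v _
      rw [Finset.sum_mul _ _ _, Finset.sum_congr rfl (fun k _ => card_smul_fiber htrans k v),
        Finset.sum_const, smul_eq_mul]
    calc (∑ v ∈ F, ∑ k ∈ K, (univ.filter (fun g : G => g • k = v)).card) * Fintype.card Ω
        = ∑ v ∈ F, (∑ k ∈ K, (univ.filter (fun g : G => g • k = v)).card) * Fintype.card Ω :=
          Finset.sum_mul _ _ _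
      _ = ∑ v ∈ F, K.card * Fintype.card G := Finset.sum_congr rfl hv
      _ = F.card * (K.card * Fintype.card G) := by rw [Finset.sum_const, smul_eq_mul]
      _ = (F.card * K.card) * Fintype.card G := by ring
  have hGpos : 0 < Fintype.card G := Fintype.card_pos
  have h2 : (F.card * K.card) * Fintype.card G = Fintype.card Ω * Fintype.card G := by
    rw [← key, ← hswap, hT, mul_comm]
  exact Nat.eq_of_mul_eq_mul_right hGpos h2


/-- A permutation viewed as an element of the endomorphism monoid. -/
def permEnd (g : Equiv.Perm Ω) : Function.End Ω := ⇑g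

variable {S : Subsemigroup (Function.End Ω)} {r : ℕ}

lemma injOn_min (hmin : ∀ h ∈ S, r ≤ rank h) {s : Function.End Ω} (hs : s ∈ S)
    (hrk : rank s = r) {t : Function.End Ω} (ht : t ∈ S) :
    Set.InjOn t (univ.image (s : Ω → Ω) : Finset Ω) := by
  intro a ha b hb hab
  by_contra hne
  rw [Finset.mem_coe] at ha hb
  have hKsub : (univ.image (s : Ω → Ω)).image t ⊆ ((univ.image (s : Ω → Ω)).erase b).image t := by
    intro y hy
    obtain ⟨w, hw, rfl⟩ := Finset.mem_image.mp hy
    by_cases hwb : w = b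
    · subst hwb
      exact Finset.mem_image.mpr ⟨a, Finset.mem_erase.mpr ⟨hne, ha⟩, hab⟩
    · exact Finset.mem_image.mpr ⟨w, Finset.mem_erase.mpr ⟨hwb, hw⟩, rfl⟩
  have hts : rank (t * s) = ((univ.image (s : Ω → Ω)).image t).card := by
    show (univ.image (t ∘ s)).card = _
    exact congrArg Finset.card (Finset.image_image (f := (s : Ω → Ω)) (g := (t : Ω → Ω))).symm
  have h2 := hmin (t * s) (mul_mem ht hs)
  rw [hts] at h2
  have h1 : ((univ.image (s : Ω → Ω)).image t).card ≤ (univ.image (s : Ω → Ω)).card - 1 := by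
    calc ((univ.image (s : Ω → Ω)).image t).card
        ≤ (((univ.image (s : Ω → Ω)).erase b).image t).card := Finset.card_le_card hKsub
      _ ≤ ((univ.image (s : Ω → Ω)).erase b).card := Finset.card_image_le
      _ = (univ.image (s : Ω → Ω)).card - 1 := by rw [Finset.card_erase_of_mem hb]
  have h3 : 0 < (univ.image (s : Ω → Ω)).card := Finset.card_pos.mpr ⟨b, hb⟩
  have h4 : (univ.image (s : Ω → Ω)).card = r := hrk
  omega

variable {G : Subgroup (Equiv.Perm Ω)}

lemma filter_card_one (hGS : ∀ g : G, permEnd (g : Equiv.Perm Ω) ∈ S)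
    (hmin : ∀ h ∈ S, r ≤ rank h) {s : Function.End Ω} (hs : s ∈ S) (hrk : rank s = r)
    (g : G) {k : Ω} (hk : k ∈ univ.image (s : Ω → Ω)) :
    ((univ.filter (fun z => s z = k)).filter
      (fun v => g⁻¹ • v ∈ univ.image (s : Ω → Ω))).card = 1 := by
  have ht : s * permEnd (g : Equiv.Perm Ω) ∈ S := mul_mem hs (hGS g)
  have hinj : Set.InjOn (s * permEnd (g : Equiv.Perm Ω))
      (univ.image (s : Ω → Ω) : Finset Ω) := injOn_min hmin hs hrk ht
  have himg : (univ.image (s : Ω → Ω)).image (s * permEnd (g : Equiv.Perm Ω))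
      = univ.image (s : Ω → Ω) := by
    apply Finset.eq_of_subset_of_card_le
    · intro y hy
      obtain ⟨w, hw, rfl⟩ := Finset.mem_image.mp hy
      exact Finset.mem_image.mpr ⟨(g : Equiv.Perm Ω) w, mem_univ _, rfl⟩
    · rw [Finset.card_image_of_injOn hinj]
  obtain ⟨u, hu, htu⟩ := Finset.mem_image.mp (himg ▸ hk)
  have hset : (univ.filter (fun z => s z = k)).filter
      (fun v => g⁻¹ • v ∈ univ.image (s : Ω → Ω)) = {g • u} := by
    ext v
    simp only [mem_filter, mem_univ, true_and, mem_singleton]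
    constructor
    · rintro ⟨hv, hvK⟩
      have he1 : (s * permEnd (g : Equiv.Perm Ω)) (g⁻¹ • v) = (s * permEnd (g : Equiv.Perm Ω)) u := by
        show s ((g : Equiv.Perm Ω) (g⁻¹ • v)) = _
        have he2 : (g : Equiv.Perm Ω) (g⁻¹ • v) = v := smul_inv_smul g v
        rw [he2, htu, hv]
      have := hinj (Finset.mem_coe.mpr hvK) (Finset.mem_coe.mpr hu) he1
      rw [← this, smul_inv_smul]
    · rintro rfl
      refine ⟨htu, ?_⟩
      rw [inv_smul_smul]; exact hu
  rw [hset, Finset.card_singleton]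

lemma uniform_fiber (htrans : MulAction.IsPretransitive G Ω)
    (hGS : ∀ g : G, permEnd (g : Equiv.Perm Ω) ∈ S)
    (hmin : ∀ h ∈ S, r ≤ rank h) {s : Function.End Ω} (hs : s ∈ S) (hrk : rank s = r)
    {k : Ω} (hk : k ∈ univ.image (s : Ω → Ω)) :
    (univ.filter (fun z => s z = k)).card * r = Fintype.card Ω := by
  have := count_aux_s18 htrans (univ.image (s : Ω → Ω)) (univ.filter (fun z => s z = k))
    (fun g => filter_card_one hGS hmin hs hrk g hk)
  have hK : (univ.image (s : Ω → Ω)).card = r := hrk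
  rwa [hK] at this

lemma two_pairs {A : Finset Ω} (hA : A.card = 4) {c : Ω → Ω} {a b u v : Ω}
    (ha : a ∈ A) (hb : b ∈ A) (hu : u ∈ A) (hv : v ∈ A)
    (hab : a ≠ b) (huv : u ≠ v) (hva : v ≠ a) (hvb : v ≠ b)
    (e1 : c a = c b) (e2 : c u = c v) : (A.image c).card ≤ 2 := by
  have hmem : ∀ z ∈ A, z ≠ b → z ≠ v → c z ∈ ((A.erase b).erase v).image c := by
    intro z hz h1 h2
    exact Finset.mem_image.mpr ⟨z, Finset.mem_erase.mpr ⟨h2, Finset.mem_erase.mpr ⟨h1, hz⟩⟩, rfl⟩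
  have hsub : A.image c ⊆ ((A.erase b).erase v).image c := by
    intro y hy
    obtain ⟨w, hw, rfl⟩ := Finset.mem_image.mp hy
    by_cases hwb : w = b
    · subst hwb; rw [← e1]; exact hmem a ha hab hva.symm
    · by_cases hwv : w = v
      · subst hwv
        by_cases hub : u = b
        · rw [← e2, hub, ← e1]
          exact hmem a ha hab hva.symm
        · rw [← e2]; exact hmem u hu hub huv
      · exact hmem w hw hwb hwv
  have h2 : ((A.erase b).erase v).card = 2 := by
    rw [Finset.card_erase_of_mem (Finset.mem_erase.mpr ⟨hvb, hv⟩), Finset.card_erase_of_mem hb, hA]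
  calc (A.image c).card ≤ (((A.erase b).erase v).image c).card := Finset.card_le_card hsub
    _ ≤ ((A.erase b).erase v).card := Finset.card_image_le
    _ ≤ 2 := h2.le

lemma no_r2 (hn : 2 < Fintype.card Ω) (hG : IsPrimitive G)
    (hGS : ∀ g : G, permEnd (g : Equiv.Perm Ω) ∈ S)
    (hmin : ∀ h ∈ S, r ≤ rank h) {s : Function.End Ω} (hs : s ∈ S)
    (hrk : rank s = r) (hr2 : r = 2) : False := by
  subst hr2
  have hrk' : (univ.image (s : Ω → Ω)).card = 2 := hrk
  obtain ⟨a, b, hab, hK⟩ := Finset.card_eq_two.mp hrk'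
  have haK : a ∈ univ.image (s : Ω → Ω) := by rw [hK]; simp
  have hbK : b ∈ univ.image (s : Ω → Ω) := by rw [hK]; simp
  have tv : ∀ u : Ω, s u = a ∨ s u = b := by
    intro u
    have h : s u ∈ univ.image (s : Ω → Ω) := Finset.mem_image.mpr ⟨u, mem_univ u, rfl⟩
    rw [hK] at h
    simpa using h
  have hAdj : ∀ t ∈ S, (t : Ω → Ω) a ≠ t b :=
    fun t ht he => hab (injOn_min hmin hs hrk ht (Finset.mem_coe.mpr haK) (Finset.mem_coe.mpr hbK) he)
  let Adj : Ω → Ω → Prop := fun x y => x ≠ y ∧ ∀ t ∈ S, (t : Ω → Ω) x ≠ t y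
  have hAinv : ∀ (g : G) {x y}, Adj x y → Adj (g • x) (g • y) := by
    rintro g x y ⟨h1, h2⟩
    refine ⟨fun he => h1 ((smul_left_cancel_iff g).mp he), ?_⟩
    intro t ht he
    exact h2 (t * permEnd (g : Equiv.Perm Ω)) (mul_mem ht (hGS g)) he
  let R : Ω → Ω → Prop := Relation.EqvGen Adj
  have hRinv : ∀ (g : G) {x y}, R x y → R (g • x) (g • y) := by
    intro g x y h
    induction h with
    | rel x y h => exact Relation.EqvGen.rel _ _ (hAinv g h)
    | refl x => exact Relation.EqvGen.refl _
    | symm x y _ ih => exact Relation.EqvGen.symm _ _ ih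
    | trans x y z _ _ ih1 ih2 => exact Relation.EqvGen.trans _ _ _ ih1 ih2
  have hBlock := isBlock_of_rel (G := G) R (fun h => Relation.EqvGen.symm _ _ h)
      (fun h1 h2 => Relation.EqvGen.trans _ _ _ h1 h2) hRinv a
  have hRall : ∀ x y, R x y := by
    rcases hG.2 _ hBlock with hsub | huniv
    · exact absurd (hsub (show a ∈ {y | R a y} from Relation.EqvGen.refl a)
        (show b ∈ {y | R a y} from Relation.EqvGen.rel _ _ ⟨hab, hAdj⟩)) hab
    · have hy : ∀ y, R a y := by
        intro y
        have : y ∈ {y | R a y} := huniv ▸ Set.mem_univ y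
        exact this
      exact fun x y => Relation.EqvGen.trans _ _ _ (Relation.EqvGen.symm _ _ (hy x)) (hy y)
  have tv3 : ∀ u w p : Ω, s u ≠ s w → s w ≠ s p → s u = s p := by
    intro u w p h1 h2
    rcases tv u with h3 | h3 <;> rcases tv w with h4 | h4 <;> rcases tv p with h5 | h5 <;>
      simp_all
  have key : ∀ (g : G) (x y : Ω), s x = s y ↔ s (g • x) = s (g • y) := by
    intro g x y
    have h := hRall x y
    induction h with
    | rel x y h => exact iff_of_false (h.2 s hs) ((hAinv g h).2 s hs)
    | refl x => exact iff_of_true rfl rfl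
    | symm x y h ih => exact ⟨fun e => (ih.mp e.symm).symm, fun e => (ih.mpr e.symm).symm⟩
    | trans x y z h1 h2 ih1 ih2 =>
      by_cases hxy : s x = s y
      · have hgxy := ih1.mp hxy
        rw [hxy, hgxy]; exact ih2
      · have hgxy : ¬ s (g • x) = s (g • y) := fun he => hxy (ih1.mpr he)
        by_cases hyz : s y = s z
        · have hgyz := ih2.mp hyz
          rw [← hyz, ← hgyz]
          exact iff_of_false hxy hgxy
        · have hgyz : ¬ s (g • y) = s (g • z) := fun he => hyz (ih2.mpr he)
          exact iff_of_true (tv3 x y z hxy hyz) (tv3 _ _ _ hgxy hgyz)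
  have hblockB := isBlock_of_rel (G := G) (fun x y => (s : Ω → Ω) x = s y)
      (fun h => h.symm) (fun h1 h2 => h1.trans h2) (by intro g x y h; exact (key g x y).mp h) a
  have hsa : s a ∈ univ.image (s : Ω → Ω) := Finset.mem_image.mpr ⟨a, mem_univ a, rfl⟩
  have hcard := uniform_fiber hG.1 hGS hmin hs hrk hsa
  rcases hG.2 _ hblockB with hsub | huniv
  · have h2 : 1 < (univ.filter (fun z => s z = s a)).card := by omega
    obtain ⟨x, hx, y, hy, hxy⟩ := Finset.one_lt_card.mp h2
    have hx' : (s : Ω → Ω) a = s x := ((Finset.mem_filter.mp hx).2).symm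
    have hy' : (s : Ω → Ω) a = s y := ((Finset.mem_filter.mp hy).2).symm
    exact hxy (hsub hx' hy')
  · have huu : univ.filter (fun z => s z = s a) = univ := by
      ext z
      simp only [mem_filter, mem_univ, true_and, iff_true]
      have : z ∈ {y | (s : Ω → Ω) a = s y} := huniv ▸ Set.mem_univ z
      exact this.symm
    rw [huu, Finset.card_univ] at hcard
    omega

lemma no_r3 (hn : 2 < Fintype.card Ω) (hG : IsPrimitive G)
    (hGS : ∀ g : G, permEnd (g : Equiv.Perm Ω) ∈ S)
    (hmin : ∀ h ∈ S, r ≤ rank h) {s : Function.End Ω} (hs : s ∈ S)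
    (hrk : rank s = r) (hr3 : r = 3) {f : Function.End Ω} (hf : f ∈ S)
    (hrf : rank f = 4) : False := by
  subst hr3
  have hAcard : (univ.image (f : Ω → Ω)).card = 4 := hrf
  set A := univ.image (f : Ω → Ω) with hA
  set Q : Ω → Finset Ω := fun x => univ.filter (fun z => f z = x) with hQ
  have hQpos : ∀ x ∈ A, 0 < (Q x).card := by
    intro x hx
    obtain ⟨z, _, rfl⟩ := Finset.mem_image.mp hx
    exact Finset.card_pos.mpr ⟨z, by simp [hQ]⟩
  have hQsum : ∑ x ∈ A, (Q x).card = Fintype.card Ω := by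
    rw [← Finset.card_univ]
    exact (Finset.card_eq_sum_card_fiberwise (fun z _ => Finset.mem_image_of_mem f (mem_univ z))).symm
  have hmS : ∀ g : G, s * permEnd (g : Equiv.Perm Ω) * f ∈ S :=
    fun g => mul_mem (mul_mem hs (hGS g)) hf
  have himg : ∀ g : G, univ.image ((s * permEnd (g : Equiv.Perm Ω) * f : Function.End Ω) : Ω → Ω)
      = A.image (fun x => s ((g : Equiv.Perm Ω) x)) := by
    intro g
    rw [hA, Finset.image_image (f := (f : Ω → Ω)) (g := fun x => s ((g : Equiv.Perm Ω) x))]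
    rfl
  have hrm : ∀ g : G, rank (s * permEnd (g : Equiv.Perm Ω) * f) = 3 := by
    intro g
    refine le_antisymm ?_ (hmin _ (hmS g))
    have hsub : A.image (fun x => s ((g : Equiv.Perm Ω) x)) ⊆ univ.image (s : Ω → Ω) := by
      intro y hy
      obtain ⟨x, _, rfl⟩ := Finset.mem_image.mp hy
      exact Finset.mem_image.mpr ⟨(g : Equiv.Perm Ω) x, mem_univ _, rfl⟩
    have : rank (s * permEnd (g : Equiv.Perm Ω) * f)
        = (A.image (fun x => s ((g : Equiv.Perm Ω) x))).card := by
      show (univ.image ((s * permEnd (g : Equiv.Perm Ω) * f : Function.End Ω) : Ω → Ω)).card = _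
      rw [himg g]
    rw [this]
    calc (A.image (fun x => s ((g : Equiv.Perm Ω) x))).card
        ≤ (univ.image (s : Ω → Ω)).card := Finset.card_le_card hsub
      _ = 3 := hrk
  have hcA : ∀ g : G, (A.image (fun x => s ((g : Equiv.Perm Ω) x))).card = 3 := by
    intro g
    have h1 := hrm g
    have h2 : rank (s * permEnd (g : Equiv.Perm Ω) * f)
        = (A.image (fun x => s ((g : Equiv.Perm Ω) x))).card := by
      show (univ.image ((s * permEnd (g : Equiv.Perm Ω) * f : Function.End Ω) : Ω → Ω)).card = _
      rw [himg g]
    rw [h2] at h1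
    exact h1
  set lone : G → Ω → Prop :=
    fun g x => ∀ y ∈ A, s ((g : Equiv.Perm Ω) y) = s ((g : Equiv.Perm Ω) x) → y = x with hlone
  have hfiber : ∀ (g : G) (x), x ∈ A → lone g x →
      univ.filter (fun z => (s * permEnd (g : Equiv.Perm Ω) * f : Function.End Ω) z
        = s ((g : Equiv.Perm Ω) x)) = Q x := by
    intro g x hx hl
    ext z
    simp only [mem_filter, mem_univ, true_and, hQ]
    constructor
    · intro hz
      have hz' : s ((g : Equiv.Perm Ω) (f z)) = s ((g : Equiv.Perm Ω) x) := hz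
      exact hl (f z) (Finset.mem_image_of_mem f (mem_univ z)) hz'
    · intro hz
      show s ((g : Equiv.Perm Ω) (f z)) = s ((g : Equiv.Perm Ω) x)
      rw [hz]
  have huni : ∀ (g : G) (k : Ω), k ∈ univ.image
        ((s * permEnd (g : Equiv.Perm Ω) * f : Function.End Ω) : Ω → Ω) →
      (univ.filter (fun z => (s * permEnd (g : Equiv.Perm Ω) * f : Function.End Ω) z = k)).card * 3
        = Fintype.card Ω :=
    fun g k hk => uniform_fiber hG.1 hGS hmin (hmS g) (hrm g) hk
  have hmemk : ∀ (g : G) (x), x ∈ A → s ((g : Equiv.Perm Ω) x) ∈ univ.image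
      ((s * permEnd (g : Equiv.Perm Ω) * f : Function.End Ω) : Ω → Ω) := by
    intro g x hx
    obtain ⟨z, _, rfl⟩ := Finset.mem_image.mp hx
    exact Finset.mem_image.mpr ⟨z, mem_univ _, rfl⟩
  have hlcard : ∀ (g : G) (x), x ∈ A → lone g x → (Q x).card * 3 = Fintype.card Ω := by
    intro g x hx hl
    have := huni g _ (hmemk g x hx)
    rwa [hfiber g x hx hl] at this
  by_cases hcase : ∀ x ∈ A, ∃ g : G, lone g x
  · obtain ⟨x₀, hx₀⟩ : A.Nonempty := Finset.card_pos.mp (by omega)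
    obtain ⟨g0, hg0⟩ := hcase x₀ hx₀
    have hq0 := hlcard g0 x₀ hx₀ hg0
    have hall : ∀ x ∈ A, (Q x).card = (Q x₀).card := by
      intro x hx
      obtain ⟨g, hg⟩ := hcase x hx
      have h1 := hlcard g x hx hg
      omega
    have hsum4 : ∑ x ∈ A, (Q x).card = 4 * (Q x₀).card := by
      rw [Finset.sum_congr rfl hall, Finset.sum_const, hAcard, smul_eq_mul]
    have h3 := hQpos x₀ hx₀
    omega
  · push_neg at hcase
    obtain ⟨x₀, hx₀A, hx₀⟩ := hcase
    have hpart : ∀ g : G, ∃ y ∈ A, y ≠ x₀ ∧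
        s ((g : Equiv.Perm Ω) y) = s ((g : Equiv.Perm Ω) x₀) := by
      intro g
      have h := hx₀ g
      simp only [hlone, not_forall] at h
      obtain ⟨y, hyA, hy1, hy2⟩ := h
      exact ⟨y, hyA, hy2, hy1⟩
    have hconst : ∀ (g₁ g₂ : G) (y₁ y₂), y₁ ∈ A → y₂ ∈ A → y₁ ≠ x₀ → y₂ ≠ x₀ →
        s ((g₁ : Equiv.Perm Ω) y₁) = s ((g₁ : Equiv.Perm Ω) x₀) →
        s ((g₂ : Equiv.Perm Ω) y₂) = s ((g₂ : Equiv.Perm Ω) x₀) → y₁ = y₂ := by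
      intro g₁ g₂ y₁ y₂ h1A h2A h1x h2x he1 he2
      by_contra hne
      have hl : lone g₂ y₁ := by
        intro u huA heu
        by_contra hneu
        have h2p := two_pairs (c := fun x => s ((g₂ : Equiv.Perm Ω) x)) hAcard hx₀A h2A huA h1A
          (Ne.symm h2x) hneu h1x hne he2.symm heu
        have := hcA g₂
        omega
      have hQl := hlcard g₂ y₁ h1A hl
      have hq1 := huni g₁ _ (hmemk g₁ x₀ hx₀A)
      have hsub : Q x₀ ∪ Q y₁ ⊆ univ.filter
          (fun z => (s * permEnd (g₁ : Equiv.Perm Ω) * f : Function.End Ω) z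
            = s ((g₁ : Equiv.Perm Ω) x₀)) := by
        intro z hz
        rw [Finset.mem_union] at hz
        simp only [hQ, mem_filter, mem_univ, true_and] at hz ⊢
        rcases hz with hz | hz
        · show s ((g₁ : Equiv.Perm Ω) (f z)) = _
          rw [hz]
        · show s ((g₁ : Equiv.Perm Ω) (f z)) = _
          rw [hz]
          exact he1
      have hdisj : Disjoint (Q x₀) (Q y₁) := by
        rw [Finset.disjoint_left]
        intro z hz1 hz2
        simp only [hQ, mem_filter] at hz1 hz2
        exact h1x (hz2.2.symm.trans hz1.2)
      have hle := Finset.card_le_card hsub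
      rw [Finset.card_union_of_disjoint hdisj] at hle
      have hp := hQpos x₀ hx₀A
      omega
    obtain ⟨y₀, hy₀A, hy₀ne, hy₀⟩ := hpart 1
    have hally : ∀ g : G, s ((g : Equiv.Perm Ω) y₀) = s ((g : Equiv.Perm Ω) x₀) := by
      intro g
      obtain ⟨y, hyA, hyne, hy⟩ := hpart g
      have he : y = y₀ := hconst g 1 y y₀ hyA hy₀A hyne hy₀ne hy hy₀
      rwa [← he]
    have hblock := isBlock_of_rel (G := G)
      (fun u v => ∀ g : G, s ((g : Equiv.Perm Ω) u) = s ((g : Equiv.Perm Ω) v))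
      (fun h g => (h g).symm) (fun h1 h2 g => (h1 g).trans (h2 g))
      (by
        intro g x y h g'
        have h1 : (g' : Equiv.Perm Ω) (g • x) = ((g' * g : G) : Equiv.Perm Ω) x := rfl
        have h2 : (g' : Equiv.Perm Ω) (g • y) = ((g' * g : G) : Equiv.Perm Ω) y := rfl
        rw [h1, h2]
        exact h (g' * g)) x₀
    rcases hG.2 _ hblock with hsub | huniv
    · exact hy₀ne (hsub (fun g => (hally g).symm) (fun g => rfl))
    · have hallv : ∀ v : Ω, s v = s x₀ := by
        intro v
        have hv : v ∈ {y | ∀ g : G, s ((g : Equiv.Perm Ω) x₀) = s ((g : Equiv.Perm Ω) y)} :=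
          huniv ▸ Set.mem_univ v
        have := hv 1
        simpa using this.symm
      have hsm : univ.image (s : Ω → Ω) ⊆ {s x₀} := by
        intro y hy
        obtain ⟨v, _, rfl⟩ := Finset.mem_image.mp hy
        simp [hallv v]
      have : (univ.image (s : Ω → Ω)).card ≤ 1 :=
        le_trans (Finset.card_le_card hsm) (by simp)
      have h4 : (univ.image (s : Ω → Ω)).card = 3 := hrk
      omega

end Aux

theorem stmt18 (hn : 2 < Fintype.card Ω) (G : Subgroup (Equiv.Perm Ω))
    (hG : IsPrimitive G) (f : Ω → Ω)
    (hnonuniform : ∃ x y : Ω,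
      (Finset.univ.filter (fun z => f z = f x)).card ≠
        (Finset.univ.filter (fun z => f z = f y)).card)
    (hf : rank f = 3 ∨ rank f = 4) : Synchronizes G f := by
  by_contra hsync
  haveI : Nonempty Ω := Fintype.card_pos_iff.mp (by omega)
  have hfS : (f : Function.End Ω) ∈ genSemigroup G f :=
    Subsemigroup.subset_closure (Set.mem_union_right _ rfl)
  have hGS : ∀ g : G, permEnd (g : Equiv.Perm Ω) ∈ genSemigroup G f :=
    fun g => Subsemigroup.subset_closure (Set.mem_union_left _ ⟨(g : Equiv.Perm Ω), g.2, rfl⟩)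
  have hnoconst : ∀ h ∈ genSemigroup G f, ∀ c : Ω, ∃ x, (h : Ω → Ω) x ≠ c := by
    intro h hh c
    by_contra hc
    push_neg at hc
    exact hsync ⟨h, hh, c, hc⟩
  have hrank2 : ∀ h ∈ genSemigroup G f, 2 ≤ rank h := by
    intro h hh
    have h0 : 0 < rank h := Finset.card_pos.mpr (Finset.univ_nonempty.image h)
    rcases Nat.lt_or_ge (rank h) 2 with hlt | hge
    · exfalso
      have h1 : (univ.image (h : Ω → Ω)).card = 1 := by
        have : rank h = 1 := by omega
        exact this
      obtain ⟨c, hc⟩ := Finset.card_eq_one.mp h1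
      obtain ⟨x, hx⟩ := hnoconst h hh c
      apply hx
      have hmem : h x ∈ univ.image (h : Ω → Ω) := Finset.mem_image_of_mem _ (mem_univ x)
      rw [hc] at hmem
      simpa using hmem
    · exact hge
  have hTne : {n : ℕ | ∃ h ∈ genSemigroup G f, rank h = n}.Nonempty := ⟨rank f, f, hfS, rfl⟩
  obtain ⟨s, hsS, hrs⟩ := Nat.sInf_mem hTne
  set r := sInf {n : ℕ | ∃ h ∈ genSemigroup G f, rank h = n} with hr
  have hmin : ∀ h ∈ genSemigroup G f, r ≤ rank h := fun h hh => Nat.sInf_le ⟨h, hh, rfl⟩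
  have hr2 : 2 ≤ r := hrs ▸ hrank2 s hsS
  have hrle : r ≤ rank f := hmin f hfS
  have hfne : rank f ≠ r := by
    intro he
    obtain ⟨x, y, hxy⟩ := hnonuniform
    have hx : f x ∈ univ.image (f : Ω → Ω) := Finset.mem_image_of_mem _ (mem_univ x)
    have hy : f y ∈ univ.image (f : Ω → Ω) := Finset.mem_image_of_mem _ (mem_univ y)
    have h1 := uniform_fiber hG.1 hGS hmin hfS he hx
    have h2 := uniform_fiber hG.1 hGS hmin hfS he hy
    have hrpos : 0 < r := by omega
    exact hxy (Nat.eq_of_mul_eq_mul_right hrpos (h1.trans h2.symm))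
  rcases hf with h3 | h4
  · have he2 : r = 2 := by omega
    exact no_r2 hn hG hGS hmin hsS hrs he2
  · rcases Nat.lt_or_ge r 3 with hlt | hge
    · have he2 : r = 2 := by omega
      exact no_r2 hn hG hGS hmin hsS hrs he2
    · have he3 : r = 3 := by omega
      exact no_r3 hn hG hGS hmin hsS hrs he3 hfS h4
end
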